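/- arXiv:1804.08147 — 5 statements merged into one kernel-verified Lean document; each statement's English description precedes it below -/
import Mathlib

section
/- Let P be the Petersen graph. Then cdim(P) = 4, and moreover cdim_P(v) = 4 for every vertex v of P. -/
open SimpleGraph

variable {V : Type*}

/-- `S` is a resolving set of `G`. -/
def IsResolving (G : SimpleGraph V) (S : Set V) : Prop :=
  ∀ x y : V, x ≠ y → ∃ z ∈ S, G.dist z x ≠ G.dist z y

/-- `S` is a connected resolving set of `G`. -/
def IsConnResolving (G : SimpleGraph V) (S : Set V) : Prop :=
  IsResolving G S ∧ (G.induce S).Connected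

/-- The metric dimension of `G`. -/
noncomputable def metricDim (G : SimpleGraph V) : ℕ :=
  sInf {n | ∃ S : Set V, IsResolving G S ∧ S.ncard = n}

/-- The connected metric dimension of `G`. -/
noncomputable def cdim (G : SimpleGraph V) : ℕ :=
  sInf {n | ∃ S : Set V, IsConnResolving G S ∧ S.ncard = n}

/-- The connected metric dimension of `G` at a vertex `v`. -/
noncomputable def cdimAt (G : SimpleGraph V) (v : V) : ℕ :=
  sInf {n | ∃ S : Set V, IsConnResolving G S ∧ v ∈ S ∧ S.ncard = n}

/-- The Petersen graph: vertices are the 2-element subsets of a 5-element set, with two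
vertices adjacent iff the corresponding subsets are disjoint. -/
def petersen : SimpleGraph {s : Finset (Fin 5) // s.card = 2} where
  Adj a b := Disjoint a.1 b.1
  symm := ⟨fun a b h => h.symm⟩
  loopless := ⟨fun a h => by
    simp only [disjoint_self, Finset.bot_eq_empty] at h
    have h2 := a.2
    rw [h] at h2
    simp at h2⟩

abbrev V10 := {s : Finset (Fin 5) // s.card = 2}

/-- Computable distance function on the Petersen graph. -/
def d (a b : V10) : ℕ := if a = b then 0 else if Disjoint a.1 b.1 then 1 else 2

set_option maxRecDepth 100000 in
lemma common : ∀ a b : V10, a ≠ b → ¬ Disjoint a.1 b.1 →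
    ∃ z : V10, Disjoint a.1 z.1 ∧ Disjoint z.1 b.1 := by decide

lemma petersen_adj (a b : V10) : petersen.Adj a b ↔ Disjoint a.1 b.1 := Iff.rfl

lemma dist_eq (a b : V10) : petersen.dist a b = d a b := by
  unfold d
  split_ifs with h1 h2
  · subst h1; exact dist_self
  · exact dist_eq_one_iff_adj.mpr h2
  · obtain ⟨z, hz1, hz2⟩ := common a b h1 h2
    have hle : petersen.dist a b ≤ 2 := by
      exact dist_le (.cons hz1 (.cons hz2 .nil) : petersen.Walk a b)
    have h0 : 0 < petersen.dist a b :=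
      Reachable.pos_dist_of_ne ⟨show petersen.Walk a b from .cons hz1 (.cons hz2 .nil)⟩ h1
    have hne1 : petersen.dist a b ≠ 1 := fun h => h2 (dist_eq_one_iff_adj.mp h)
    omega

set_option maxRecDepth 100000 in
lemma keyfact2 : ∀ a b : V10, ∃ x y : V10, x ≠ y ∧ d a x = d a y ∧ d b x = d b y := by decide

set_option maxRecDepth 100000 in
lemma keyfact3 : ∀ a b c : V10, Disjoint a.1 b.1 → Disjoint b.1 c.1 →
    ∃ x y : V10, x ≠ y ∧ d a x = d a y ∧ d b x = d b y ∧ d c x = d c y := by decide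

def good (v a b c e : V10) : Prop :=
    (v = a ∨ v = b ∨ v = c ∨ v = e) ∧
    Disjoint a.1 b.1 ∧ Disjoint b.1 c.1 ∧ Disjoint c.1 e.1 ∧
    ({a, b, c, e} : Finset V10).card = 4 ∧
    ∀ x y : V10, x ≠ y → d a x ≠ d a y ∨ d b x ≠ d b y ∨ d c x ≠ d c y ∨ d e x ≠ d e y

instance (v a b c e : V10) : Decidable (good v a b c e) := by unfold good; infer_instance

set_option maxRecDepth 1000000 in
lemma keyUB : ∀ v : V10, ∃ a b c e : V10, good v a b c e := by decide

/-- First step of a walk in an induced subgraph. -/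
lemma step {S : Set V10} (h : (petersen.induce S).Connected) {u v : V10}
    (hu : u ∈ S) (hv : v ∈ S) (hne : u ≠ v) :
    ∃ w : V10, w ∈ S ∧ petersen.Adj u w := by
  obtain ⟨p⟩ := h.preconnected ⟨u, hu⟩ ⟨v, hv⟩
  cases p with
  | nil => exact absurd rfl hne
  | cons hadj _ =>
    rename_i w _
    exact ⟨w.1, w.2, hadj⟩

/-- No 3-vertex path resolves the Petersen graph. -/
lemma nores3 {x y z : V10} (hxy : petersen.Adj x y) (hyz : petersen.Adj y z) :
    ¬ IsResolving petersen {x, y, z} := by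
  obtain ⟨x', y', hne, h1, h2, h3⟩ := keyfact3 x y z hxy hyz
  intro hres
  obtain ⟨w, hw, hd⟩ := hres x' y' hne
  rw [dist_eq, dist_eq] at hd
  rcases hw with rfl | rfl | rfl
  · exact hd h1
  · exact hd h2
  · exact hd h3

/-- No set of at most 2 vertices resolves the Petersen graph. -/
lemma nores2 (a b : V10) : ¬ IsResolving petersen {a, b} := by
  obtain ⟨x, y, hne, h1, h2⟩ := keyfact2 a b
  intro hres
  obtain ⟨w, hw, hd⟩ := hres x y hne
  rw [dist_eq, dist_eq] at hd
  rcases hw with rfl | rfl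
  · exact hd h1
  · exact hd h2

/-- Lower bound: every connected resolving set has at least 4 elements. -/
lemma lower {S : Set V10} (h : IsConnResolving petersen S) : 4 ≤ S.ncard := by
  by_contra hlt
  push_neg at hlt
  obtain ⟨hres, hconn⟩ := h
  interval_cases hn : S.ncard
  · -- ncard = 0
    rw [Set.ncard_eq_zero S.toFinite] at hn
    obtain ⟨w, hw, -⟩ := hres ⟨{0, 1}, by decide⟩ ⟨{0, 2}, by decide⟩ (by decide)
    rw [hn] at hw
    exact hw
  · -- ncard = 1
    rw [Set.ncard_eq_one] at hn
    obtain ⟨a, rfl⟩ := hn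
    have hset : ({a, a} : Set V10) = {a} := by simp
    exact nores2 a a (by rw [hset]; exact hres)
  · -- ncard = 2
    rw [Set.ncard_eq_two] at hn
    obtain ⟨a, b, -, rfl⟩ := hn
    exact nores2 a b hres
  · -- ncard = 3
    rw [Set.ncard_eq_three] at hn
    obtain ⟨a, b, c, hab, hac, hbc, rfl⟩ := hn
    have ha : a ∈ ({a, b, c} : Set V10) := by simp
    have hb : b ∈ ({a, b, c} : Set V10) := by simp
    have hc : c ∈ ({a, b, c} : Set V10) := by simp
    have hA : petersen.Adj a b ∨ petersen.Adj a c := by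
      obtain ⟨w, hw, haw⟩ := step hconn ha hb hab
      have hwa : w ≠ a := fun h => petersen.irrefl (h ▸ haw)
      rcases hw with rfl | rfl | rfl
      · exact absurd rfl hwa
      · exact Or.inl haw
      · exact Or.inr haw
    have hC : petersen.Adj c a ∨ petersen.Adj c b := by
      obtain ⟨w, hw, hcw⟩ := step hconn hc ha (Ne.symm hac)
      have hwc : w ≠ c := fun h => petersen.irrefl (h ▸ hcw)
      rcases hw with rfl | rfl | rfl
      · exact Or.inl hcw
      · exact Or.inr hcw
      · exact absurd rfl hwc
    have hB : petersen.Adj b a ∨ petersen.Adj b c := by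
      obtain ⟨w, hw, hbw⟩ := step hconn hb ha (Ne.symm hab)
      have hwb : w ≠ b := fun h => petersen.irrefl (h ▸ hbw)
      rcases hw with rfl | rfl | rfl
      · exact Or.inl hbw
      · exact absurd rfl hwb
      · exact Or.inr hbw
    rcases hA with hA | hA
    · rcases hC with hC | hC
      · -- edges ab, ca : path b-a-c
        refine nores3 (x := b) (y := a) (z := c) hA.symm hC.symm ?_
        have : ({a, b, c} : Set V10) = {b, a, c} := by ext t; simp; tauto
        rw [← this]; exact hres
      · -- edges ab, cb : path a-b-c
        exact nores3 (x := a) (y := b) (z := c) hA hC.symm hres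
    · rcases hB with hB | hB
      · -- edges ac, ba : path b-a-c
        refine nores3 (x := b) (y := a) (z := c) hB hA ?_
        have : ({a, b, c} : Set V10) = {b, a, c} := by ext t; simp; tauto
        rw [← this]; exact hres
      · -- edges ac, bc : path a-c-b
        refine nores3 (x := a) (y := c) (z := b) hA hB.symm ?_
        have : ({a, b, c} : Set V10) = {a, c, b} := by ext t; simp; tauto
        rw [← this]; exact hres

/-- A 4-vertex path induces a connected subgraph. -/
lemma conn4 {a b c e : V10} (hab : petersen.Adj a b) (hbc : petersen.Adj b c)
    (hce : petersen.Adj c e) : (petersen.induce {a, b, c, e}).Connected := by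
  set S : Set V10 := {a, b, c, e} with hS
  have ha : a ∈ S := by simp [hS]
  have hb : b ∈ S := by simp [hS]
  have hc : c ∈ S := by simp [hS]
  have he : e ∈ S := by simp [hS]
  have rab : (petersen.induce S).Reachable ⟨a, ha⟩ ⟨b, hb⟩ := Adj.reachable hab
  have rbc : (petersen.induce S).Reachable ⟨b, hb⟩ ⟨c, hc⟩ := Adj.reachable hbc
  have rce : (petersen.induce S).Reachable ⟨c, hc⟩ ⟨e, he⟩ := Adj.reachable hce
  have key : ∀ u (hu : u ∈ S), (petersen.induce S).Reachable ⟨a, ha⟩ ⟨u, hu⟩ := by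
    intro u hu
    have hu' : u = a ∨ u = b ∨ u = c ∨ u = e := by simpa [hS] using hu
    rcases hu' with rfl | rfl | rfl | rfl
    · exact Reachable.refl _
    · exact rab
    · exact rab.trans rbc
    · exact (rab.trans rbc).trans rce
  have : Nonempty S := ⟨⟨a, ha⟩⟩
  exact ⟨fun u v => ((key u.1 u.2).symm.trans (key v.1 v.2))⟩

lemma upperAt (v : V10) : ∃ S : Set V10, IsConnResolving petersen S ∧ v ∈ S ∧ S.ncard = 4 := by
  obtain ⟨a, b, c, e, hv, hab, hbc, hce, hcard, hres⟩ := keyUB v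
  refine ⟨(↑({a, b, c, e} : Finset V10) : Set V10), ⟨?_, ?_⟩, ?_, ?_⟩
  · intro x y hxy
    rcases hres x y hxy with h | h | h | h
    · exact ⟨a, by simp, by rw [dist_eq, dist_eq]; exact h⟩
    · exact ⟨b, by simp, by rw [dist_eq, dist_eq]; exact h⟩
    · exact ⟨c, by simp, by rw [dist_eq, dist_eq]; exact h⟩
    · exact ⟨e, by simp, by rw [dist_eq, dist_eq]; exact h⟩
  · have : (↑({a, b, c, e} : Finset V10) : Set V10) = ({a, b, c, e} : Set V10) := by simp
    rw [this]
    exact conn4 hab hbc hce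
  · simp only [Finset.coe_insert, Finset.coe_singleton, Set.mem_insert_iff,
      Set.mem_singleton_iff]
    tauto
  · rw [Set.ncard_coe_finset]; exact hcard

/-- For the Petersen graph `P`, `cdim(P) = 4` and `cdim_P(v) = 4`
for every vertex `v`. -/
theorem stmt_13 :
    cdim petersen = 4 ∧ ∀ v, cdimAt petersen v = 4 := by
  constructor
  · apply le_antisymm
    · obtain ⟨S, hS, -, hcard⟩ := upperAt ⟨{0, 1}, by decide⟩
      exact Nat.sInf_le ⟨S, hS, hcard⟩
    · apply le_csInf
      · obtain ⟨S, hS, -, hcard⟩ := upperAt ⟨{0, 1}, by decide⟩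
        exact ⟨4, S, hS, hcard⟩
      · rintro n ⟨S, hS, rfl⟩
        exact lower hS
  · intro v
    apply le_antisymm
    · obtain ⟨S, hS, hv, hcard⟩ := upperAt v
      exact Nat.sInf_le ⟨S, hS, hv, hcard⟩
    · apply le_csInf
      · obtain ⟨S, hS, hv, hcard⟩ := upperAt v
        exact ⟨4, S, hS, hv, hcard⟩
      · rintro n ⟨S, hS, -, rfl⟩
        exact lower hS
end

section
/- For every integer k ≥ 1, there exists a finite simple connected graph G such that cdim(G) − dim(G) = k. -/
open SimpleGraph

variable {V : Type*}

namespace Stmt15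

/-! ### General auxiliary lemmas -/

lemma walk_length_lower {W : Type*} {G : SimpleGraph W} (f : W → ℕ)
    (hlip : ∀ u v, G.Adj u v → f v ≤ f u + 1) :
    ∀ {u v : W} (w : G.Walk u v), f v ≤ f u + w.length := by
  intro u v w
  induction w with
  | nil => simp
  | cons h p ih =>
      have := hlip _ _ h
      simp only [SimpleGraph.Walk.length_cons]
      omega

lemma dist_eq_of {W : Type*} {G : SimpleGraph W} {a v : W} (f : W → ℕ)
    (hlip : ∀ u v, G.Adj u v → f v ≤ f u + 1) (h0 : f a = 0)
    (hw : ∃ w : G.Walk a v, w.length = f v) : G.dist a v = f v := by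
  obtain ⟨w, hwl⟩ := hw
  refine le_antisymm (hwl ▸ SimpleGraph.dist_le w) ?_
  obtain ⟨p, hp⟩ := (SimpleGraph.Walk.reachable w).exists_walk_length_eq_dist
  have := walk_length_lower f hlip p
  rw [h0, hp] at this
  simpa using this

lemma ncard_ge_dist {W : Type*} [Fintype W] {G : SimpleGraph W} {S : Set W} {u w : W}
    (hc : (G.induce S).Connected) (hu : u ∈ S) (hw : w ∈ S) :
    G.dist u w + 1 ≤ S.ncard := by
  classical
  obtain ⟨wk⟩ := hc ⟨u, hu⟩ ⟨w, hw⟩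
  set p := wk.toPath with hpdef
  have hmap : G.dist u w ≤ p.1.length := by
    have := SimpleGraph.dist_le ((p.1).map (SimpleGraph.Embedding.induce S).toHom)
    rw [SimpleGraph.Walk.length_map] at this
    exact this
  have hnodup := p.2.support_nodup
  have hlen : p.1.support.length = p.1.length + 1 := SimpleGraph.Walk.length_support _
  have hcard : p.1.length + 1 ≤ S.ncard := by
    calc p.1.length + 1 = p.1.support.toFinset.card := by
          rw [List.toFinset_card_of_nodup hnodup, hlen]
      _ ≤ Fintype.card S := Finset.card_le_univ _
      _ = S.ncard := by
          rw [Set.ncard_eq_toFinset_card', Set.toFinset_card]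
  omega

/-! ### The double broom graph -/

/-- Vertex type: `Sum.inl 0, Sum.inl 1` are the leaves at one end, `Sum.inl 2, Sum.inl 3`
the leaves at the other end, and `Sum.inr b` the path vertices. -/
abbrev Vt (n : ℕ) := Fin 4 ⊕ Fin (n + 2)

/-- Base relation for the double broom. -/
def rel (n : ℕ) : Vt n → Vt n → Prop
  | Sum.inl a, Sum.inr b => (a.val ≤ 1 ∧ b.val = 0) ∨ (2 ≤ a.val ∧ b.val = n + 1)
  | Sum.inr b, Sum.inr b' => b.val + 1 = b'.val
  | _, _ => False

/-- The double broom graph. -/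
def Gr (n : ℕ) : SimpleGraph (Vt n) := SimpleGraph.fromRel (rel n)

variable {n : ℕ}

lemma adj_iff {u v : Vt n} : (Gr n).Adj u v ↔ u ≠ v ∧ (rel n u v ∨ rel n v u) := by
  simp [Gr, SimpleGraph.fromRel_adj]

lemma adj_left {a : Fin 4} (ha : a.val ≤ 1) :
    (Gr n).Adj (Sum.inl a) (Sum.inr ⟨0, by omega⟩) := by
  rw [adj_iff]
  exact ⟨by simp, Or.inl (Or.inl ⟨ha, rfl⟩)⟩

lemma adj_right {a : Fin 4} (ha : 2 ≤ a.val) :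
    (Gr n).Adj (Sum.inl a) (Sum.inr ⟨n + 1, by omega⟩) := by
  rw [adj_iff]
  exact ⟨by simp, Or.inl (Or.inr ⟨ha, rfl⟩)⟩

lemma adj_step {j : ℕ} (h : j + 1 < n + 2) :
    (Gr n).Adj (Sum.inr ⟨j, by omega⟩) (Sum.inr ⟨j + 1, h⟩) := by
  rw [adj_iff]
  refine ⟨by simp [Fin.ext_iff], Or.inl rfl⟩

/-- A walk along the central path. -/
lemma exists_walk_seg : ∀ d i (h : i + d < n + 2),
    ∃ w : (Gr n).Walk (Sum.inr ⟨i, by omega⟩) (Sum.inr ⟨i + d, h⟩), w.length = d := by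
  intro d
  induction d with
  | zero => exact fun i h => ⟨SimpleGraph.Walk.nil, rfl⟩
  | succ d ih =>
      intro i h
      obtain ⟨w, hw⟩ := ih i (by omega)
      exact ⟨w.concat (adj_step h), by simp [SimpleGraph.Walk.length_concat, hw]⟩

lemma exists_walk_path (j : ℕ) (h : j < n + 2) :
    ∃ w : (Gr n).Walk (Sum.inr ⟨0, by omega⟩) (Sum.inr ⟨j, h⟩), w.length = j := by
  obtain ⟨w, hw⟩ := exists_walk_seg j 0 (by omega : 0 + j < n + 2)
  exact ⟨w.copy rfl (by congr 1; ext; simp), by simp only [SimpleGraph.Walk.length_copy]; exact hw⟩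

/-! ### Distance functions -/

/-- Distances from the left leaf `Sum.inl s` (for `s = 0, 1`). -/
def fx (n s : ℕ) : Vt n → ℕ
  | Sum.inl a => if a.val = s then 0 else if a.val ≤ 1 then 2 else n + 3
  | Sum.inr b => b.val + 1

/-- Distances from the right leaf `Sum.inl s` (for `s = 2, 3`). -/
def fy (n s : ℕ) : Vt n → ℕ
  | Sum.inl a => if a.val = s then 0 else if 2 ≤ a.val then 2 else n + 3
  | Sum.inr b => n + 2 - b.val

lemma fx_lip (s : ℕ) (hs : s ≤ 1) : ∀ u v, (Gr n).Adj u v → fx n s v ≤ fx n s u + 1 := by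
  intro u v h
  rw [adj_iff] at h
  obtain ⟨-, h⟩ := h
  rcases u with a | b <;> rcases v with a' | b' <;>
    simp only [rel, false_or, or_false] at h <;> simp only [fx]
  · split_ifs <;> omega
  · split_ifs <;> omega
  · omega

lemma fy_lip (s : ℕ) (hs : 2 ≤ s) : ∀ u v, (Gr n).Adj u v → fy n s v ≤ fy n s u + 1 := by
  intro u v h
  rw [adj_iff] at h
  obtain ⟨-, h⟩ := h
  rcases u with a | b <;> rcases v with a' | b' <;>
    simp only [rel, false_or, or_false] at h <;> simp only [fy]
  · split_ifs <;> omega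
  · split_ifs <;> omega
  · omega

lemma fx_walk (s : Fin 4) (hs : s.val ≤ 1) (v : Vt n) :
    ∃ w : (Gr n).Walk (Sum.inl s) v, w.length = fx n s.val v := by
  rcases v with a | b
  · by_cases hv : a = s
    · subst hv
      exact ⟨SimpleGraph.Walk.nil, by simp [fx]⟩
    · by_cases ha : a.val ≤ 1
      · -- the other left leaf, distance 2
        refine ⟨(SimpleGraph.Walk.cons (adj_left hs)
          (SimpleGraph.Walk.cons (adj_left ha).symm SimpleGraph.Walk.nil)), ?_⟩
        have : a.val ≠ s.val := fun hh => hv (Fin.ext hh)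
        simp only [SimpleGraph.Walk.length_cons, SimpleGraph.Walk.length_copy, SimpleGraph.Walk.length_concat, SimpleGraph.Walk.length_reverse, SimpleGraph.Walk.length_nil]
        simp [fx, this, ha]
      · -- a right leaf, distance n+3
        obtain ⟨w, hw⟩ := exists_walk_path (n := n) (n + 1) (by omega)
        refine ⟨(SimpleGraph.Walk.cons (adj_left hs) w).concat (adj_right (by omega)).symm, ?_⟩
        have : a.val ≠ s.val := fun hh => hv (Fin.ext hh)
        simp only [SimpleGraph.Walk.length_cons, SimpleGraph.Walk.length_copy, SimpleGraph.Walk.length_concat, SimpleGraph.Walk.length_reverse, SimpleGraph.Walk.length_nil, hw]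
        simp [fx, this, ha, SimpleGraph.Walk.length_concat, hw]
  · obtain ⟨w, hw⟩ := exists_walk_path (n := n) b.val b.isLt
    refine ⟨SimpleGraph.Walk.cons (adj_left hs) (w.copy rfl (by simp)), ?_⟩
    simp only [SimpleGraph.Walk.length_cons, SimpleGraph.Walk.length_copy, SimpleGraph.Walk.length_concat, SimpleGraph.Walk.length_reverse, SimpleGraph.Walk.length_nil, hw]
    simp [fx, hw]

lemma fy_walk (s : Fin 4) (hs : 2 ≤ s.val) (v : Vt n) :
    ∃ w : (Gr n).Walk (Sum.inl s) v, w.length = fy n s.val v := by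
  rcases v with a | b
  · by_cases hv : a = s
    · subst hv
      exact ⟨SimpleGraph.Walk.nil, by simp [fy]⟩
    · by_cases ha : 2 ≤ a.val
      · refine ⟨(SimpleGraph.Walk.cons (adj_right hs)
          (SimpleGraph.Walk.cons (adj_right ha).symm SimpleGraph.Walk.nil)), ?_⟩
        have : a.val ≠ s.val := fun hh => hv (Fin.ext hh)
        simp [fy, this, ha]
      · -- a left leaf, distance n+3
        obtain ⟨w, hw⟩ := exists_walk_seg (n := n) (n + 1) 0 (by omega)
        refine ⟨(SimpleGraph.Walk.cons (adj_right hs)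
          ((w.copy rfl (by congr 1; ext; simp)).reverse)).concat
            (adj_left (by omega)).symm, ?_⟩
        have h1 : a.val ≠ s.val := fun hh => hv (Fin.ext hh)
        simp only [SimpleGraph.Walk.length_cons, SimpleGraph.Walk.length_copy, SimpleGraph.Walk.length_concat, SimpleGraph.Walk.length_reverse, SimpleGraph.Walk.length_nil, hw]
        simp [fy, h1, ha, SimpleGraph.Walk.length_concat, hw]
  · -- path vertex: walk down from the right end
    have hb := b.isLt
    obtain ⟨w, hw⟩ := exists_walk_seg (n := n) (n + 1 - b.val) b.val (by omega)
    refine ⟨SimpleGraph.Walk.cons (adj_right hs)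
      ((w.copy rfl (by congr 1; ext; simp; omega)).reverse), ?_⟩
    simp [fy, hw]
    omega

lemma dist_fx (s : Fin 4) (hs : s.val ≤ 1) (v : Vt n) :
    (Gr n).dist (Sum.inl s) v = fx n s.val v :=
  dist_eq_of _ (fx_lip s.val hs) (by simp [fx]) (fx_walk s hs v)

lemma dist_fy (s : Fin 4) (hs : 2 ≤ s.val) (v : Vt n) :
    (Gr n).dist (Sum.inl s) v = fy n s.val v :=
  dist_eq_of _ (fy_lip s.val hs) (by simp [fy]) (fy_walk s hs v)

/-! ### Connectivity of the double broom -/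

lemma gr_connected : (Gr n).Connected := by
  rw [SimpleGraph.connected_iff]
  refine ⟨fun u v => ?_, ⟨Sum.inl 0⟩⟩
  have hu := (fx_walk (n := n) 0 (by decide) u).choose.reachable
  have hv := (fx_walk (n := n) 0 (by decide) v).choose.reachable
  exact hu.symm.trans hv

/-! ### Metric dimension of the double broom is 2 -/

lemma key_inj (x y : Vt n) (h1 : fx n 0 x = fx n 0 y) (h2 : fy n 2 x = fy n 2 y) : x = y := by
  rcases x with a | b <;> rcases y with a' | b' <;> simp only [fx, fy] at h1 h2
  · have ha := a.isLt; have ha' := a'.isLt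
    congr 1
    ext
    split_ifs at h1 h2 <;> omega
  · exfalso; have := b'.isLt; split_ifs at h1 h2 <;> omega
  · exfalso; have := b.isLt; split_ifs at h1 h2 <;> omega
  · congr 1
    ext
    omega

lemma resolving_pair : IsResolving (Gr n) {Sum.inl 0, Sum.inl 2} := by
  intro x y hxy
  by_contra hc
  push_neg at hc
  have h1 := hc (Sum.inl 0) (by simp)
  have h2 := hc (Sum.inl 2) (by simp)
  rw [dist_fx 0 (by decide) x, dist_fx 0 (by decide) y] at h1
  rw [dist_fy 2 (by decide) x, dist_fy 2 (by decide) y] at h2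
  exact hxy (key_inj x y h1 h2)

lemma left_twin {z : Vt n} (hz : z ≠ Sum.inl 0) (hz' : z ≠ Sum.inl 1) :
    (Gr n).dist z (Sum.inl 0) = (Gr n).dist z (Sum.inl 1) := by
  rw [SimpleGraph.dist_comm, dist_fx 0 (by decide),
    SimpleGraph.dist_comm, dist_fx 1 (by decide)]
  rcases z with a | b
  · have h0 : a.val ≠ 0 := fun h => hz (congrArg Sum.inl (Fin.ext h))
    have h1 : a.val ≠ 1 := fun h => hz' (congrArg Sum.inl (Fin.ext h))
    simp only [fx]
    split_ifs <;> omega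
  · rfl

lemma right_twin {z : Vt n} (hz : z ≠ Sum.inl 2) (hz' : z ≠ Sum.inl 3) :
    (Gr n).dist z (Sum.inl 2) = (Gr n).dist z (Sum.inl 3) := by
  rw [SimpleGraph.dist_comm, dist_fy 2 (by decide),
    SimpleGraph.dist_comm, dist_fy 3 (by decide)]
  rcases z with a | b
  · have h0 : a.val ≠ 2 := fun h => hz (congrArg Sum.inl (Fin.ext h))
    have h1 : a.val ≠ 3 := fun h => hz' (congrArg Sum.inl (Fin.ext h))
    simp only [fy]
    split_ifs <;> omega
  · rfl

lemma resolver_left {S : Set (Vt n)} (hS : IsResolving (Gr n) S) :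
    ∃ z ∈ S, z = Sum.inl 0 ∨ z = Sum.inl 1 := by
  obtain ⟨z, hzS, hne⟩ := hS (Sum.inl 0) (Sum.inl 1) (by simp [Fin.ext_iff])
  refine ⟨z, hzS, ?_⟩
  by_contra h
  push_neg at h
  exact hne (left_twin h.1 h.2)

lemma resolver_right {S : Set (Vt n)} (hS : IsResolving (Gr n) S) :
    ∃ z ∈ S, z = Sum.inl 2 ∨ z = Sum.inl 3 := by
  obtain ⟨z, hzS, hne⟩ := hS (Sum.inl 2) (Sum.inl 3) (by simp [Fin.ext_iff])
  refine ⟨z, hzS, ?_⟩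
  by_contra h
  push_neg at h
  exact hne (right_twin h.1 h.2)

lemma not_resolving_small {S : Set (Vt n)} (hS : IsResolving (Gr n) S) : 2 ≤ S.ncard := by
  obtain ⟨u, huS, hu⟩ := resolver_left hS
  obtain ⟨w, hwS, hw⟩ := resolver_right hS
  have hne : u ≠ w := by
    rcases hu with rfl | rfl <;> rcases hw with rfl | rfl <;> simp [Fin.ext_iff] <;> decide
  exact Set.one_lt_ncard_iff (Set.toFinite S) |>.mpr ⟨u, w, huS, hwS, hne⟩

lemma metricDim_gr : metricDim (Gr n) = 2 := by
  have hmem : 2 ∈ {m | ∃ S : Set (Vt n), IsResolving (Gr n) S ∧ S.ncard = m} :=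
    ⟨{Sum.inl 0, Sum.inl 2}, resolving_pair, Set.ncard_pair (by simp [Fin.ext_iff])⟩
  refine le_antisymm (Nat.sInf_le hmem) (le_csInf ⟨2, hmem⟩ ?_)
  rintro m ⟨S, hS, rfl⟩
  exact not_resolving_small hS

/-! ### Connected metric dimension of the double broom is n + 4 -/

/-- The minimum connected resolving set. -/
def Fs (n : ℕ) : Finset (Vt n) :=
  {Sum.inl 0, Sum.inl 2} ∪ Finset.univ.image Sum.inr

lemma mem_Fs {v : Vt n} : v ∈ (↑(Fs n) : Set (Vt n)) ↔
    (v = Sum.inl 0 ∨ v = Sum.inl 2 ∨ ∃ b, v = Sum.inr b) := by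
  simp only [Fs, Finset.coe_union, Set.mem_union, Finset.coe_insert, Set.mem_insert_iff,
    Finset.coe_singleton, Set.mem_singleton_iff, Finset.coe_image, Finset.coe_univ,
    Set.image_univ, Set.mem_range]
  constructor
  · rintro ((rfl | rfl) | ⟨b, rfl⟩)
    · exact Or.inl rfl
    · exact Or.inr (Or.inl rfl)
    · exact Or.inr (Or.inr ⟨_, rfl⟩)
  · rintro (rfl | rfl | ⟨b, rfl⟩)
    · exact Or.inl (Or.inl rfl)
    · exact Or.inl (Or.inr rfl)
    · exact Or.inr ⟨b, rfl⟩

lemma ncard_Fs : (↑(Fs n) : Set (Vt n)).ncard = n + 4 := by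
  rw [Set.ncard_coe_finset, Fs, Finset.card_union_of_disjoint (by simp)]
  rw [Finset.card_image_of_injective _ Sum.inr_injective]
  simp [Fin.ext_iff]
  omega

lemma conn_Fs : ((Gr n).induce ↑(Fs n)).Connected := by
  rw [SimpleGraph.connected_iff]
  have hseg : ∀ j (h : j < n + 2),
      ((Gr n).induce ↑(Fs n)).Reachable ⟨Sum.inr ⟨0, by omega⟩, mem_Fs.mpr (Or.inr (Or.inr ⟨_, rfl⟩))⟩
        ⟨Sum.inr ⟨j, h⟩, mem_Fs.mpr (Or.inr (Or.inr ⟨_, rfl⟩))⟩ := by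
    intro j
    induction j with
    | zero => exact fun h => SimpleGraph.Reachable.refl _
    | succ j ih =>
        intro h
        refine (ih (by omega)).trans (SimpleGraph.Adj.reachable ?_)
        exact adj_step h
  have hall : ∀ (v : Vt n) (hv : v ∈ (↑(Fs n) : Set (Vt n))),
      ((Gr n).induce ↑(Fs n)).Reachable ⟨Sum.inr ⟨0, by omega⟩, mem_Fs.mpr (Or.inr (Or.inr ⟨_, rfl⟩))⟩
        ⟨v, hv⟩ := by
    intro v hv
    rcases mem_Fs.mp hv with rfl | rfl | ⟨b, rfl⟩
    · refine (SimpleGraph.Adj.reachable ?_).symm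
      exact adj_left (n := n) (a := 0) (by decide)
    · refine (hseg (n + 1) (by omega)).trans (SimpleGraph.Adj.reachable ?_)
      exact (adj_right (n := n) (a := 2) (by decide)).symm
    · exact hseg b.val b.isLt
  refine ⟨fun u v => ?_, ⟨⟨Sum.inl 0, mem_Fs.mpr (Or.inl rfl)⟩⟩⟩
  exact (hall u.1 u.2).symm.trans (hall v.1 v.2)

lemma resolving_mono {W : Type*} {G : SimpleGraph W} {S T : Set W} (h : S ⊆ T)
    (hS : IsResolving G S) : IsResolving G T := fun x y hxy =>
  let ⟨z, hz, hne⟩ := hS x y hxy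
  ⟨z, h hz, hne⟩

lemma cdim_lower {S : Set (Vt n)} (hr : IsResolving (Gr n) S)
    (hc : ((Gr n).induce S).Connected) : n + 4 ≤ S.ncard := by
  obtain ⟨u, huS, hu⟩ := resolver_left hr
  obtain ⟨w, hwS, hw⟩ := resolver_right hr
  have hd : (Gr n).dist u w = n + 3 := by
    rcases hu with rfl | rfl <;> rcases hw with rfl | rfl <;>
      rw [dist_fx _ (by decide)] <;>
        simp [fx, show ((2 : Fin 4)).val = 2 from rfl, show ((3 : Fin 4)).val = 3 from rfl]
  have := ncard_ge_dist hc huS hwS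
  omega

lemma cdim_gr : cdim (Gr n) = n + 4 := by
  have hmem : n + 4 ∈ {m | ∃ S : Set (Vt n), IsConnResolving (Gr n) S ∧ S.ncard = m} := by
    refine ⟨↑(Fs n), ⟨resolving_mono ?_ resolving_pair, conn_Fs⟩, ncard_Fs⟩
    intro z hz
    rcases hz with rfl | hz
    · exact mem_Fs.mpr (Or.inl rfl)
    · rw [Set.mem_singleton_iff] at hz
      subst hz
      exact mem_Fs.mpr (Or.inr (Or.inl rfl))
  refine le_antisymm (Nat.sInf_le hmem) (le_csInf ⟨_, hmem⟩ ?_)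
  rintro m ⟨S, ⟨hr, hc⟩, rfl⟩
  exact cdim_lower hr hc

/-! ### The trivial graph (case k = 1) -/

lemma unit_connected : (⊥ : SimpleGraph Unit).Connected := by
  rw [SimpleGraph.connected_iff]
  exact ⟨fun u v => by rw [Subsingleton.elim u v], ⟨()⟩⟩

lemma metricDim_unit : metricDim (⊥ : SimpleGraph Unit) = 0 :=
  Nat.sInf_eq_zero.mpr (Or.inl
    ⟨∅, fun x y hxy => absurd (Subsingleton.elim x y) hxy, Set.ncard_empty _⟩)

lemma cdim_unit : cdim (⊥ : SimpleGraph Unit) = 1 := by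
  have h1 : 1 ∈ {m | ∃ S : Set Unit, IsConnResolving (⊥ : SimpleGraph Unit) S ∧ S.ncard = m} := by
    refine ⟨{()}, ⟨fun x y hxy => absurd (Subsingleton.elim x y) hxy, ?_⟩, Set.ncard_singleton _⟩
    rw [SimpleGraph.connected_iff]
    exact ⟨fun u v => by rw [Subsingleton.elim u v], ⟨⟨(), rfl⟩⟩⟩
  have h0 : 0 ∉ {m | ∃ S : Set Unit, IsConnResolving (⊥ : SimpleGraph Unit) S ∧ S.ncard = m} := by
    rintro ⟨S, ⟨-, hc⟩, hS0⟩
    rw [Set.ncard_eq_zero (Set.toFinite S)] at hS0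
    subst hS0
    obtain ⟨⟨x, hx⟩⟩ := hc.nonempty
    exact hx
  have hle := Nat.sInf_le h1
  have hmem := Nat.sInf_mem ⟨1, h1⟩
  rcases Nat.eq_zero_or_pos (sInf {m | ∃ S : Set Unit,
      IsConnResolving (⊥ : SimpleGraph Unit) S ∧ S.ncard = m}) with h | h
  · exact absurd (h ▸ hmem) h0
  · unfold cdim
    omega

end Stmt15

/-- For every integer `k ≥ 1`, there is a finite simple connected
graph `G` with `cdim(G) - dim(G) = k`. -/
theorem stmt_15 (k : ℕ) (hk : 1 ≤ k) :
    ∃ (V : Type) (_ : Fintype V) (G : SimpleGraph V), G.Connected ∧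
      cdim G = metricDim G + k := by
  by_cases h1 : k = 1
  · subst h1
    exact ⟨Unit, inferInstance, ⊥, Stmt15.unit_connected, by
      rw [Stmt15.cdim_unit, Stmt15.metricDim_unit]⟩
  · refine ⟨Stmt15.Vt (k - 2), inferInstance, Stmt15.Gr (k - 2), Stmt15.gr_connected, ?_⟩
    rw [Stmt15.cdim_gr, Stmt15.metricDim_gr]
    omega
end

section
/- For k ≥ 2, let G = K_{a_1, a_2, ..., a_k} be the complete k-partite graph of order n = a_1 + a_2 + ... + a_k ≥ 4 (each a_i ≥ 1), and let s be the number of partite sets of G consisting of exactly one element. Then cdim(G) = n − 1 if s = 1 and k = 2; cdim(G) = n − k if s = 0; and cdim(G) = n + s − k − 1 otherwise. -/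
open SimpleGraph

variable {V : Type*}

section Aux

variable {k : ℕ} {a : Fin k → ℕ}

local notation "KV" => (i : Fin k) × Fin (a i)
local notation "KG" => completeMultipartiteGraph fun i => Fin (a i)

lemma kg_adj (x y : KV) : (KG).Adj x y ↔ x.1 ≠ y.1 := Iff.rfl

lemma kg_dist (hk : 2 ≤ k) (ha : ∀ i, 1 ≤ a i) (x y : KV) :
    (KG).dist x y = if x = y then 0 else if x.1 = y.1 then 2 else 1 := by
  split_ifs with h1 h2
  · subst h1; exact SimpleGraph.dist_self
  · -- x ≠ y, same part
    obtain ⟨j, hj⟩ := Fintype.exists_ne_of_one_lt_card (by simp; omega) x.1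
    have hzx : (KG).Adj ⟨j, ⟨0, ha j⟩⟩ x := hj
    have hzy : (KG).Adj ⟨j, ⟨0, ha j⟩⟩ y := fun h => hj (h.trans h2.symm)
    have hle : (KG).dist x y ≤ 2 := by
      simpa using SimpleGraph.dist_le (.cons hzx.symm (.cons hzy .nil))
    have hne0 : (KG).dist x y ≠ 0 := by
      intro h0
      rcases SimpleGraph.dist_eq_zero_iff_eq_or_not_reachable.mp h0 with h | h
      · exact h1 h
      · exact h ⟨.cons hzx.symm (.cons hzy .nil)⟩
    have hne1 : (KG).dist x y ≠ 1 := by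
      intro h0
      exact (by simpa using h2 : ¬ x.1 ≠ y.1)
        ((kg_adj x y).mp (SimpleGraph.dist_eq_one_iff_adj.mp h0))
    omega
  · rw [SimpleGraph.dist_eq_one_iff_adj]; exact h2

end Aux

section Aux2

variable {k : ℕ} {a : Fin k → ℕ}

local notation "KV" => (i : Fin k) × Fin (a i)
local notation "KG" => completeMultipartiteGraph fun i => Fin (a i)

lemma kg_isResolving (hk : 2 ≤ k) (ha : ∀ i, 1 ≤ a i) {S : Set ((i : Fin k) × Fin (a i))}
    (h1 : ∀ x y : KV, x.1 = y.1 → x ≠ y → x ∈ S ∨ y ∈ S)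
    (h2 : ∀ i j : Fin k, i ≠ j → ∃ z ∈ S, z.1 = i ∨ z.1 = j) :
    IsResolving KG S := by
  intro x y hxy
  by_cases hp : x.1 = y.1
  · rcases h1 x y hp hxy with h | h
    · refine ⟨x, h, ?_⟩
      rw [kg_dist hk ha, kg_dist hk ha]
      simp [hxy, hp]
    · refine ⟨y, h, ?_⟩
      rw [kg_dist hk ha, kg_dist hk ha]
      simp [Ne.symm hxy, hp.symm]
  · obtain ⟨z, hz, hcase⟩ := h2 x.1 y.1 hp
    refine ⟨z, hz, ?_⟩
    rw [kg_dist hk ha, kg_dist hk ha]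
    clear h1 h2
    split_ifs <;> simp_all

lemma kg_res_pair (hk : 2 ≤ k) (ha : ∀ i, 1 ≤ a i) {S : Set ((i : Fin k) × Fin (a i))}
    (hS : IsResolving KG S) {x y : KV} (hp : x.1 = y.1) (hxy : x ≠ y) :
    x ∈ S ∨ y ∈ S := by
  by_contra h
  push_neg at h
  obtain ⟨z, hz, hd⟩ := hS x y hxy
  apply hd
  have h1 : z ≠ x := fun e => h.1 (e ▸ hz)
  have h2 : z ≠ y := fun e => h.2 (e ▸ hz)
  clear hd hS
  rw [kg_dist hk ha, kg_dist hk ha]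
  split_ifs <;> simp_all

lemma kg_res_cross (hk : 2 ≤ k) (ha : ∀ i, 1 ≤ a i) {S : Set ((i : Fin k) × Fin (a i))}
    (hS : IsResolving KG S) {i j : Fin k} (hij : i ≠ j) :
    ∃ z ∈ S, z.1 = i ∨ z.1 = j := by
  have hxy : (⟨i, ⟨0, ha i⟩⟩ : KV) ≠ ⟨j, ⟨0, ha j⟩⟩ :=
    fun h => hij (congrArg Sigma.fst h)
  obtain ⟨z, hz, hd⟩ := hS _ _ hxy
  refine ⟨z, hz, ?_⟩
  by_contra hc
  push_neg at hc
  apply hd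
  have h1 : z ≠ ⟨i, ⟨0, ha i⟩⟩ := fun e => hc.1 (congrArg Sigma.fst e)
  have h2 : z ≠ ⟨j, ⟨0, ha j⟩⟩ := fun e => hc.2 (congrArg Sigma.fst e)
  clear hd hS
  rw [kg_dist hk ha, kg_dist hk ha]
  split_ifs <;> simp_all

end Aux2

section Aux3

variable {k : ℕ} {a : Fin k → ℕ}

local notation "KV" => (i : Fin k) × Fin (a i)
local notation "KG" => completeMultipartiteGraph fun i => Fin (a i)

lemma kg_connected {S : Set ((i : Fin k) × Fin (a i))}
    (hne : ∃ u ∈ S, ∃ v ∈ S, u.1 ≠ v.1) :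
    ((KG).induce S).Connected := by
  obtain ⟨u, hu, v, hv, huv⟩ := hne
  have hadj : ∀ (p q : S), (p : KV).1 ≠ (q : KV).1 → ((KG).induce S).Adj p q :=
    fun p q h => h
  rw [SimpleGraph.connected_iff]
  refine ⟨?_, ⟨⟨u, hu⟩⟩⟩
  intro p q
  by_cases hpq : p = q
  · exact hpq ▸ SimpleGraph.Reachable.refl p
  · by_cases h1 : (p : KV).1 = (q : KV).1
    · -- go through u or v
      have hw : ∃ w, w ∈ S ∧ (p : KV).1 ≠ w.1 := by
        by_cases hpu : (p : KV).1 = u.1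
        · exact ⟨v, hv, fun h => huv ((hpu.symm.trans h) ▸ rfl)⟩
        · exact ⟨u, hu, hpu⟩
      obtain ⟨w, hw, hpw⟩ := hw
      exact ((hadj p ⟨w, hw⟩ hpw).reachable).trans
        ((hadj ⟨w, hw⟩ q (fun h => hpw (h1.trans h.symm))).reachable)
    · exact (hadj p q h1).reachable

lemma kg_conn_exists_ne {S : Set ((i : Fin k) × Fin (a i))}
    (hS : ((KG).induce S).Connected) {x y : KV} (hx : x ∈ S) (hy : y ∈ S)
    (hxy : x ≠ y) : ∃ u ∈ S, ∃ v ∈ S, u.1 ≠ v.1 := by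
  obtain ⟨w⟩ := hS.preconnected ⟨x, hx⟩ ⟨y, hy⟩
  cases w with
  | nil => exact absurd rfl hxy
  | @cons _ b _ h p =>
    exact ⟨x, hx, b.1, b.2, h⟩

lemma cdim_eq_of {G : SimpleGraph V} {m : ℕ}
    (h1 : ∃ S : Set V, IsConnResolving G S ∧ S.ncard = m)
    (h2 : ∀ S : Set V, IsConnResolving G S → m ≤ S.ncard) : cdim G = m := by
  refine le_antisymm (Nat.sInf_le h1) (le_csInf ⟨m, h1⟩ ?_)
  rintro n ⟨S, hS, rfl⟩
  exact h2 S hS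

end Aux3

section Aux4

variable {k : ℕ} {a : Fin k → ℕ}

local notation "KV" => (i : Fin k) × Fin (a i)
local notation "KG" => completeMultipartiteGraph fun i => Fin (a i)

open Finset in
lemma kg_ncard_eq_sum (S : Set ((i : Fin k) × Fin (a i))) [DecidablePred (· ∈ S)] :
    S.ncard = ∑ i, (Finset.univ.filter fun x : Fin (a i) => (⟨i, x⟩ : KV) ∈ S).card := by
  classical
  rw [Set.ncard_eq_toFinset_card' S,
    Finset.card_eq_sum_card_fiberwise (f := Sigma.fst) (t := Finset.univ)
      (fun x _ => Finset.mem_univ _)]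
  refine Finset.sum_congr rfl fun i _ => ?_
  have himg : S.toFinset.filter (fun x => x.1 = i) =
      (Finset.univ.filter fun x : Fin (a i) => (⟨i, x⟩ : KV) ∈ S).image
        (Sigma.mk i) := by
    ext x
    simp only [Finset.mem_filter, Finset.mem_image, Finset.mem_univ, true_and,
      Set.mem_toFinset]
    constructor
    · rcases x with ⟨j, y⟩
      rintro ⟨hx, h⟩
      dsimp at h
      subst h
      exact ⟨y, hx, rfl⟩
    · rintro ⟨y, hy, rfl⟩
      exact ⟨hy, rfl⟩
  rw [himg, Finset.card_image_of_injective _ sigma_mk_injective]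

lemma kg_fiber_ge (hk : 2 ≤ k) (ha : ∀ i, 1 ≤ a i) {S : Set ((i : Fin k) × Fin (a i))}
    [DecidablePred (· ∈ S)] (hS : IsResolving KG S) (i : Fin k) :
    a i - 1 ≤ (Finset.univ.filter fun x : Fin (a i) => (⟨i, x⟩ : KV) ∈ S).card := by
  classical
  have hsplit := Finset.card_filter_add_card_filter_not
    (s := (Finset.univ : Finset (Fin (a i)))) (p := fun x => (⟨i, x⟩ : KV) ∈ S)
  have hcard : (Finset.univ : Finset (Fin (a i))).card = a i := by simp
  have hneg : (Finset.univ.filter fun x : Fin (a i) => ¬ (⟨i, x⟩ : KV) ∈ S).card ≤ 1 := by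
    rw [Finset.card_le_one]
    intro x hx y hy
    by_contra hxy
    simp only [Finset.mem_filter] at hx hy
    have hne : (⟨i, x⟩ : KV) ≠ ⟨i, y⟩ := by
      intro h
      exact hxy (by simpa using h)
    rcases kg_res_pair hk ha hS (x := ⟨i, x⟩) (y := ⟨i, y⟩) rfl hne with h | h
    · exact hx.2 h
    · exact hy.2 h
  omega

lemma kg_empty_fiber (hk : 2 ≤ k) (ha : ∀ i, 1 ≤ a i) {S : Set ((i : Fin k) × Fin (a i))}
    (hS : IsResolving KG S) {i j : Fin k} (hij : i ≠ j) :
    (∃ x : Fin (a i), (⟨i, x⟩ : KV) ∈ S) ∨ (∃ y : Fin (a j), (⟨j, y⟩ : KV) ∈ S) := by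
  obtain ⟨z, hz, hc⟩ := kg_res_cross hk ha hS hij
  rcases z with ⟨l, y⟩
  rcases hc with h | h
  · subst h; exact Or.inl ⟨y, hz⟩
  · subst h; exact Or.inr ⟨y, hz⟩

lemma kg_lower (hk : 2 ≤ k) (ha : ∀ i, 1 ≤ a i) {S : Set ((i : Fin k) × Fin (a i))}
    (hS : IsResolving KG S) :
    (∑ i, (a i - 1)) + ((Finset.univ.filter fun i => a i = 1).card - 1) ≤ S.ncard := by
  classical
  rw [kg_ncard_eq_sum S]
  set T := Finset.univ.filter fun i =>
    a i = 1 ∧ (Finset.univ.filter fun x : Fin (a i) => (⟨i, x⟩ : KV) ∈ S).Nonempty with hTdef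
  have hpoint : ∀ i ∈ (Finset.univ : Finset (Fin k)),
      (a i - 1) + (if i ∈ T then 1 else 0) ≤
        (Finset.univ.filter fun x : Fin (a i) => (⟨i, x⟩ : KV) ∈ S).card := by
    intro i _
    by_cases hi : i ∈ T
    · obtain ⟨h1, h2⟩ := (Finset.mem_filter.mp hi).2
      have := Finset.card_pos.mpr h2
      simp only [hi, if_pos]
      omega
    · simpa [hi] using kg_fiber_ge hk ha hS i
  have hsum := Finset.sum_le_sum hpoint
  rw [Finset.sum_add_distrib] at hsum
  have hT : (∑ i, if i ∈ T then 1 else 0) = T.card := by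
    simp [Finset.sum_ite_mem]
  rw [hT] at hsum
  have hsub : T ⊆ Finset.univ.filter fun i => a i = 1 := fun i hi =>
    Finset.mem_filter.mpr ⟨Finset.mem_univ _, (Finset.mem_filter.mp hi).2.1⟩
  have hdiff : ((Finset.univ.filter fun i => a i = 1) \ T).card ≤ 1 := by
    rw [Finset.card_le_one]
    intro x hx y hy
    by_contra hxy
    rw [Finset.mem_sdiff, Finset.mem_filter] at hx hy
    have hex : ∀ z, z ∈ (Finset.univ.filter fun i => a i = 1) \ T →
        ¬ ∃ p : Fin (a z), (⟨z, p⟩ : KV) ∈ S := by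
      intro z hz ⟨p, hp⟩
      rw [Finset.mem_sdiff, Finset.mem_filter] at hz
      exact hz.2 (Finset.mem_filter.mpr ⟨Finset.mem_univ _,
        hz.1.2, ⟨p, Finset.mem_filter.mpr ⟨Finset.mem_univ _, hp⟩⟩⟩)
    rcases kg_empty_fiber hk ha hS hxy with h | h
    · exact hex x (by rw [Finset.mem_sdiff, Finset.mem_filter]; exact hx) h
    · exact hex y (by rw [Finset.mem_sdiff, Finset.mem_filter]; exact hy) h
  have hcsd := Finset.card_sdiff_of_subset hsub
  have hle := Finset.card_le_card hsub
  omega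

end Aux4

section Aux5

variable {k : ℕ} {a : Fin k → ℕ}

local notation "KV" => (i : Fin k) × Fin (a i)
local notation "KG" => completeMultipartiteGraph fun i => Fin (a i)

/-- The set obtained by removing the `0`-th vertex of part `i` for each `i ∈ J`. -/
def kgS (ha : ∀ i, 1 ≤ a i) (J : Finset (Fin k)) : Set ((i : Fin k) × Fin (a i)) :=
  {x | ¬ (x.1 ∈ J ∧ x = ⟨x.1, ⟨0, ha x.1⟩⟩)}

lemma kgS_compl (ha : ∀ i, 1 ≤ a i) (J : Finset (Fin k)) :
    (kgS ha J)ᶜ = (fun i => (⟨i, ⟨0, ha i⟩⟩ : KV)) '' ↑J := by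
  ext x
  simp only [kgS, Set.mem_compl_iff, Set.mem_setOf_eq, not_not, Set.mem_image,
    Finset.mem_coe]
  constructor
  · rintro ⟨hj, he⟩
    exact ⟨x.1, hj, he.symm⟩
  · rintro ⟨i, hi, rfl⟩
    exact ⟨hi, rfl⟩

lemma kgS_ncard (ha : ∀ i, 1 ≤ a i) (J : Finset (Fin k)) :
    (kgS ha J).ncard = (∑ i, a i) - J.card := by
  have h1 : (kgS ha J).ncard + ((kgS ha J)ᶜ).ncard = Nat.card ((i : Fin k) × Fin (a i)) :=
    Set.ncard_add_ncard_compl _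
  have h2 : ((kgS ha J)ᶜ).ncard = J.card := by
    rw [kgS_compl ha J, Set.ncard_image_of_injective _ ?_, Set.ncard_coe_finset]
    intro i j hij
    exact congrArg Sigma.fst hij
  have h3 : Nat.card ((i : Fin k) × Fin (a i)) = ∑ i, a i := by
    rw [Nat.card_eq_fintype_card]
    simp
  rw [h2, h3] at h1
  omega

lemma kgS_good (ha : ∀ i, 1 ≤ a i) {J : Finset (Fin k)} {i : Fin k}
    (h : ¬ (i ∈ J ∧ a i = 1)) : ∃ z ∈ kgS ha J, z.1 = i := by
  by_cases hiJ : i ∈ J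
  · have h2 : 2 ≤ a i := by
      have h1 := ha i
      have hne : a i ≠ 1 := fun h1 => h ⟨hiJ, h1⟩
      omega
    refine ⟨⟨i, ⟨1, h2⟩⟩, ?_, rfl⟩
    intro ⟨_, he⟩
    have : (⟨1, h2⟩ : Fin (a i)) = ⟨0, ha i⟩ := by
      simpa using he
    simp [Fin.ext_iff] at this
  · exact ⟨⟨i, ⟨0, ha i⟩⟩, fun ⟨hj, _⟩ => hiJ hj, rfl⟩

lemma kgS_resolving (hk : 2 ≤ k) (ha : ∀ i, 1 ≤ a i) {J : Finset (Fin k)}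
    (hJ : ∀ i ∈ J, ∀ j ∈ J, a i = 1 → a j = 1 → i = j) :
    IsResolving KG (kgS ha J) := by
  apply kg_isResolving hk ha
  · rintro ⟨i, x⟩ ⟨j, y⟩ hp hxy
    dsimp at hp
    subst hp
    by_contra hc
    push_neg at hc
    simp only [kgS, Set.mem_setOf_eq, not_not] at hc
    obtain ⟨⟨_, h1⟩, ⟨_, h2⟩⟩ := hc
    exact hxy (h1.trans h2.symm)
  · intro i j hij
    by_cases hgood : i ∈ J ∧ a i = 1
    · have hgj : ¬ (j ∈ J ∧ a j = 1) := fun ⟨hj1, hj2⟩ =>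
        hij (hJ i hgood.1 j hj1 hgood.2 hj2)
      obtain ⟨z, hz, hz1⟩ := kgS_good ha hgj
      exact ⟨z, hz, Or.inr hz1⟩
    · obtain ⟨z, hz, hz1⟩ := kgS_good ha hgood
      exact ⟨z, hz, Or.inl hz1⟩

end Aux5

/-- For `k ≥ 2`, let `G = K_{a_1, …, a_k}` be the complete `k`-partite
graph of order `n = a_1 + ⋯ + a_k ≥ 4` (each `a_i ≥ 1`), and let `s` be the number of
partite sets with exactly one element.  Then `cdim(G) = n - 1` if `s = 1` and `k = 2`;
`cdim(G) = n - k` if `s = 0`; and `cdim(G) = n + s - k - 1` otherwise. -/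
theorem stmt_16 (k : ℕ) (hk : 2 ≤ k) (a : Fin k → ℕ) (ha : ∀ i, 1 ≤ a i)
    (hn : 4 ≤ ∑ i, a i) :
    (((Finset.univ.filter fun i => a i = 1).card = 1 ∧ k = 2) →
      cdim (completeMultipartiteGraph fun i => Fin (a i)) = (∑ i, a i) - 1) ∧
    ((Finset.univ.filter fun i => a i = 1).card = 0 →
      cdim (completeMultipartiteGraph fun i => Fin (a i)) = (∑ i, a i) - k) ∧
    ((¬((Finset.univ.filter fun i => a i = 1).card = 1 ∧ k = 2) ∧
        (Finset.univ.filter fun i => a i = 1).card ≠ 0) →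
      cdim (completeMultipartiteGraph fun i => Fin (a i)) =
        (∑ i, a i) + (Finset.univ.filter fun i => a i = 1).card - k - 1) := by
  classical
  have hkn : k ≤ ∑ i, a i := by
    calc k = ∑ _i : Fin k, 1 := by simp
    _ ≤ ∑ i, a i := Finset.sum_le_sum fun i _ => ha i
  have hsum1 : (∑ i, (a i - 1)) + k = ∑ i, a i := by
    have : ∑ i, ((a i - 1) + 1) = ∑ i, a i :=
      Finset.sum_congr rfl fun i _ => by have := ha i; omega
    rw [Finset.sum_add_distrib] at this
    simpa using this
  have hks : (Finset.univ.filter fun i => a i = 1).card ≤ k := by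
    simpa using Finset.card_filter_le Finset.univ fun i => a i = 1
  refine ⟨?_, ?_, ?_⟩
  · -- Case s = 1, k = 2
    rintro ⟨hs1, hk2⟩
    obtain ⟨i₀, hsingles⟩ := Finset.card_eq_one.mp hs1
    have ha0 : a i₀ = 1 := by
      have h : i₀ ∈ Finset.univ.filter fun i => a i = 1 := by
        rw [hsingles]; exact Finset.mem_singleton_self _
      exact (Finset.mem_filter.mp h).2
    have hcard2 : Fintype.card (Fin k) = 2 := by simp [hk2]
    obtain ⟨i₁, hi10⟩ := Fintype.exists_ne_of_one_lt_card (by omega) i₀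
    have ha1 : a i₁ ≠ 1 := by
      intro h
      apply hi10
      have : i₁ ∈ Finset.univ.filter fun i => a i = 1 :=
        Finset.mem_filter.mpr ⟨Finset.mem_univ _, h⟩
      rw [hsingles] at this
      exact Finset.mem_singleton.mp this
    have huniv : (Finset.univ : Finset (Fin k)) = {i₀, i₁} := by
      refine (Finset.eq_univ_of_card _ ?_).symm
      rw [Finset.card_insert_of_notMem (by simpa using hi10.symm), Finset.card_singleton,
        hcard2]
    have hsplit : ∑ i, a i = a i₀ + a i₁ := by
      rw [huniv, Finset.sum_pair (Ne.symm hi10)]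
    apply cdim_eq_of
    · refine ⟨kgS ha {i₁}, ⟨kgS_resolving hk ha ?_, ?_⟩, ?_⟩
      · intro i hi j hj h1 _
        rw [Finset.mem_singleton] at hi
        exact absurd (hi ▸ h1) ha1
      · obtain ⟨z0, hz0, hz0i⟩ := kgS_good ha (J := {i₁}) (i := i₀)
          (fun ⟨h, _⟩ => hi10 (Finset.mem_singleton.mp h).symm)
        obtain ⟨z1, hz1, hz1i⟩ := kgS_good ha (J := {i₁}) (i := i₁)
          (fun ⟨_, h⟩ => ha1 h)
        exact kg_connected ⟨z0, hz0, z1, hz1, by rw [hz0i, hz1i]; exact hi10.symm⟩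
      · rw [kgS_ncard, Finset.card_singleton]
    · rintro S ⟨hres, hconn⟩
      have hf1 := kg_fiber_ge hk ha hres i₁
      have hsumS : S.ncard =
          (Finset.univ.filter fun x : Fin (a i₀) => (⟨i₀, x⟩ : (i : Fin k) × Fin (a i)) ∈ S).card +
          (Finset.univ.filter fun x : Fin (a i₁) => (⟨i₁, x⟩ : (i : Fin k) × Fin (a i)) ∈ S).card := by
        rw [kg_ncard_eq_sum S, huniv, Finset.sum_pair (Ne.symm hi10)]
      by_cases hP0 : 0 <
          (Finset.univ.filter fun x : Fin (a i₀) => (⟨i₀, x⟩ : (i : Fin k) × Fin (a i)) ∈ S).card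
      · omega
      · exfalso
        have hno : ∀ x : Fin (a i₀), (⟨i₀, x⟩ : (i : Fin k) × Fin (a i)) ∉ S := by
          intro x hx
          exact hP0 (Finset.card_pos.mpr ⟨x, Finset.mem_filter.mpr ⟨Finset.mem_univ _, hx⟩⟩)
        have hfst : ∀ u ∈ S, (u : (i : Fin k) × Fin (a i)).1 = i₁ := by
          rintro ⟨j, y⟩ hu
          have hj : j ∈ ({i₀, i₁} : Finset (Fin k)) := huniv ▸ Finset.mem_univ j
          rcases Finset.mem_insert.mp hj with h | h
          · subst h; exact absurd hu (hno y)
          · exact Finset.mem_singleton.mp h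
        have h2le : 2 ≤ S.ncard := by omega
        obtain ⟨x, y, hx, hy, hxy⟩ := (Set.one_lt_ncard_iff (Set.toFinite S)).mp h2le
        obtain ⟨u, hu, v, hv, huv⟩ := kg_conn_exists_ne hconn hx hy hxy
        exact huv ((hfst u hu).trans (hfst v hv).symm)
  · -- Case s = 0
    intro hs0
    have hai : ∀ i, a i ≠ 1 := by
      intro i h
      rw [Finset.card_eq_zero] at hs0
      have : i ∈ Finset.univ.filter fun i => a i = 1 :=
        Finset.mem_filter.mpr ⟨Finset.mem_univ _, h⟩
      simp [hs0] at this
    apply cdim_eq_of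
    · refine ⟨kgS ha Finset.univ, ⟨kgS_resolving hk ha ?_, ?_⟩, ?_⟩
      · intro i _ _ _ h1 _
        exact absurd h1 (hai i)
      · have hone : (1 : ℕ) < Fintype.card (Fin k) := by simp; omega
        obtain ⟨i₁, hi10⟩ := Fintype.exists_ne_of_one_lt_card hone ⟨0, by omega⟩
        obtain ⟨z0, hz0, hz0i⟩ := kgS_good ha (J := Finset.univ) (i := ⟨0, by omega⟩)
          (fun ⟨_, h⟩ => hai _ h)
        obtain ⟨z1, hz1, hz1i⟩ := kgS_good ha (J := Finset.univ) (i := i₁)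
          (fun ⟨_, h⟩ => hai _ h)
        exact kg_connected ⟨z1, hz1, z0, hz0, by rw [hz0i, hz1i]; exact hi10⟩
      · rw [kgS_ncard]
        simp
    · rintro S ⟨hres, _⟩
      have hlow := kg_lower hk ha hres
      rw [hs0] at hlow
      omega
  · -- Case otherwise
    rintro ⟨hnot, hs⟩
    have hk3 : 3 ≤ k := by
      by_contra hlt
      have hk2 : k = 2 := by omega
      have hs1 : (Finset.univ.filter fun i => a i = 1).card ≠ 1 := fun h => hnot ⟨h, hk2⟩
      have hs2 : (Finset.univ.filter fun i => a i = 1).card = 2 := by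
        have : (Finset.univ.filter fun i => a i = 1).card ≤ k := hks
        omega
      have huniv : (Finset.univ.filter fun i => a i = 1) = Finset.univ :=
        Finset.eq_univ_of_card _ (by simp [hs2, hk2])
      have hall : ∀ i, a i = 1 := by
        intro i
        have : i ∈ Finset.univ.filter fun i => a i = 1 := by rw [huniv]; exact Finset.mem_univ i
        exact (Finset.mem_filter.mp this).2
      have : ∑ i, a i = k := by
        rw [Finset.sum_congr rfl fun i _ => hall i]
        simp
      omega
    obtain ⟨i₀, hi₀⟩ := Finset.card_pos.mp (Nat.pos_of_ne_zero hs)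
    have ha0 : a i₀ = 1 := (Finset.mem_filter.mp hi₀).2
    have hfilters : (Finset.univ.filter fun i => a i = 1).card +
        (Finset.univ.filter fun i => ¬ a i = 1).card = k := by
      rw [Finset.card_filter_add_card_filter_not]
      simp
    have hi₀J : i₀ ∉ Finset.univ.filter fun i => ¬ a i = 1 := by simp [ha0]
    have hJcard : (insert i₀ (Finset.univ.filter fun i => ¬ a i = 1)).card =
        (Finset.univ.filter fun i => ¬ a i = 1).card + 1 :=
      Finset.card_insert_of_notMem hi₀J
    have hmemJ : ∀ i, i ∈ insert i₀ (Finset.univ.filter fun i => ¬ a i = 1) →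
        a i = 1 → i = i₀ := by
      intro i hi h1
      rcases Finset.mem_insert.mp hi with h | h
      · exact h
      · exact absurd h1 (Finset.mem_filter.mp h).2
    apply cdim_eq_of
    · refine ⟨kgS ha (insert i₀ (Finset.univ.filter fun i => ¬ a i = 1)),
        ⟨kgS_resolving hk ha ?_, ?_⟩, ?_⟩
      · intro i hi j hj h1 h2
        rw [hmemJ i hi h1, hmemJ j hj h2]
      · obtain ⟨i₁, hi10⟩ := Fintype.exists_ne_of_one_lt_card (by simp; omega) i₀
        have hi2 : ∃ i₂, i₂ ≠ i₀ ∧ i₂ ≠ i₁ := by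
          by_contra hc
          push_neg at hc
          have hsub : (Finset.univ : Finset (Fin k)) ⊆ {i₀, i₁} := by
            intro x _
            rcases eq_or_ne x i₀ with h | h
            · exact Finset.mem_insert.mpr (Or.inl h)
            · exact Finset.mem_insert.mpr (Or.inr (Finset.mem_singleton.mpr (hc x h)))
          have h1 := Finset.card_le_card hsub
          have h2 := Finset.card_insert_le i₀ ({i₁} : Finset (Fin k))
          simp at h1 h2
          omega
        obtain ⟨i₂, hi20, hi21⟩ := hi2
        have hgood : ∀ i, i ≠ i₀ →
            ¬ (i ∈ insert i₀ (Finset.univ.filter fun i => ¬ a i = 1) ∧ a i = 1) :=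
          fun i hne ⟨hmem, h1⟩ => hne (hmemJ i hmem h1)
        obtain ⟨z1, hz1, hz1i⟩ := kgS_good ha (hgood i₁ hi10)
        obtain ⟨z2, hz2, hz2i⟩ := kgS_good ha (hgood i₂ hi20)
        refine kg_connected ⟨z1, hz1, z2, hz2, ?_⟩
        rw [hz1i, hz2i]
        exact fun h => hi21 h.symm
      · rw [kgS_ncard, hJcard]
        omega
    · rintro S ⟨hres, _⟩
      have hlow := kg_lower hk ha hres
      have hspos : 1 ≤ (Finset.univ.filter fun i => a i = 1).card :=
        Nat.pos_of_ne_zero hs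
      omega
end

section
/- For s, t ≥ 2, let G = P_s □ P_t be the grid graph (the Cartesian product of the paths P_s with vertices u_1, ..., u_s and P_t with vertices w_1, ..., w_t). Let S_1 = {(u_1,w_1), (u_1,w_t)}, S_2 = {(u_1,w_1), (u_s,w_1)}, S_3 = {(u_1,w_t), (u_s,w_t)}, and S_4 = {(u_s,w_1), (u_s,w_t)}. Then a set S ⊆ V(G) is a minimum resolving set of G (that is, a resolving set of cardinality dim(G)) if and only if S = S_i for some i ∈ {1, 2, 3, 4}. -/
open SimpleGraph

variable {V : Type*}

section Aux

/-- Absolute difference of naturals. -/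
private def dd (x y : ℕ) : ℕ := (x - y) + (y - x)

private lemma pathGraph_exists_walk {n : ℕ} :
    ∀ (k : ℕ) (i j : Fin n), dd i.val j.val = k →
      ∃ w : (pathGraph n).Walk i j, w.length = k := by
  intro k
  induction k with
  | zero =>
    intro i j h
    have : i = j := Fin.ext (by simp only [dd] at h; omega)
    subst this
    exact ⟨Walk.nil, rfl⟩
  | succ k ih =>
    intro i j h
    by_cases hlt : i.val < j.val
    · have hi' : i.val + 1 < n := lt_of_le_of_lt hlt j.isLt
      have hadj : (pathGraph n).Adj i ⟨i.val + 1, hi'⟩ := pathGraph_adj.mpr (Or.inl rfl)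
      obtain ⟨w, hw⟩ := ih ⟨i.val + 1, hi'⟩ j (by simp only [dd] at h ⊢; omega)
      exact ⟨Walk.cons hadj w, by simp [hw]⟩
    · have h1 : j.val < i.val := by simp only [dd] at h; omega
      have hi' : i.val - 1 < n := by omega
      have hadj : (pathGraph n).Adj i ⟨i.val - 1, hi'⟩ :=
        pathGraph_adj.mpr (Or.inr (by simp only; omega))
      obtain ⟨w, hw⟩ := ih ⟨i.val - 1, hi'⟩ j (by simp only [dd] at h ⊢; omega)
      exact ⟨Walk.cons hadj w, by simp [hw]⟩

private lemma grid_walk_lb {s t : ℕ} {u v : Fin s × Fin t}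
    (w : (pathGraph s □ pathGraph t).Walk u v) :
    dd u.1.val v.1.val + dd u.2.val v.2.val ≤ w.length := by
  induction w with
  | nil => simp only [dd]; omega
  | cons h p ih =>
    rw [Walk.length_cons]
    rcases boxProd_adj.mp h with ⟨h1, h2⟩ | ⟨h1, h2⟩ <;>
      have hv2 := congrArg Fin.val h2 <;>
      rcases pathGraph_adj.mp h1 with hh | hh <;>
      simp only [dd] at ih ⊢ <;> omega

private lemma grid_dist {s t : ℕ} (hs : 1 ≤ s) (ht : 1 ≤ t) (x y : Fin s × Fin t) :
    (pathGraph s □ pathGraph t).dist x y = dd x.1.val y.1.val + dd x.2.val y.2.val := by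
  obtain ⟨x1, x2⟩ := x
  obtain ⟨y1, y2⟩ := y
  apply le_antisymm
  · obtain ⟨w1, hw1⟩ := pathGraph_exists_walk (dd x1.val y1.val) x1 y1 rfl
    obtain ⟨w2, hw2⟩ := pathGraph_exists_walk (dd x2.val y2.val) x2 y2 rfl
    have hle := dist_le ((w1.boxProdLeft (pathGraph t) x2).append
      (w2.boxProdRight (pathGraph s) y1))
    have hlen : ((w1.boxProdLeft (pathGraph t) x2).append
        (w2.boxProdRight (pathGraph s) y1)).length = w1.length + w2.length := by
      rw [Walk.length_append]; exact congrArg₂ (· + ·) (Walk.length_map _ _) (Walk.length_map _ _)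
    rw [hlen, hw1, hw2] at hle
    exact hle
  · have hconn : (pathGraph s □ pathGraph t).Connected := by
      haveI : Nonempty (Fin s) := ⟨⟨0, hs⟩⟩
      haveI : Nonempty (Fin t) := ⟨⟨0, ht⟩⟩
      exact Connected.boxProd ⟨pathGraph_preconnected s⟩ ⟨pathGraph_preconnected t⟩
    obtain ⟨p, hp⟩ := hconn.exists_walk_length_eq_dist (x1, x2) (y1, y2)
    rw [← hp]
    exact grid_walk_lb p

private lemma corner_aux {s t : ℕ} (hs : 2 ≤ s) (ht : 2 ≤ t)
    {a b c d : ℕ} (ha : a < s) (hb : b < t) (hc : c < s) (hd : d < t)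
    (hP : ∀ x1 x2 y1 y2 : ℕ, x1 < s → x2 < t → y1 < s → y2 < t →
      ¬(x1 = y1 ∧ x2 = y2) →
      dd a x1 + dd b x2 = dd a y1 + dd b y2 →
      dd c x1 + dd d x2 = dd c y1 + dd d y2 → False) :
    a = 0 ∨ a = s - 1 := by
  by_contra hcon
  push_neg at hcon
  obtain ⟨h0, h1⟩ := hcon
  have ha1 : 0 < a := Nat.pos_of_ne_zero h0
  have ha2 : a + 1 < s := by omega
  have key : (dd c (a-1) + dd d b = dd c (a+1) + dd d b) ∨
      (b + 1 < t ∧ dd c (a-1) + dd d b = dd c a + dd d (b+1)) ∨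
      (b + 1 < t ∧ dd c (a+1) + dd d b = dd c a + dd d (b+1)) ∨
      (0 < b ∧ dd c (a-1) + dd d b = dd c a + dd d (b-1)) ∨
      (0 < b ∧ dd c (a+1) + dd d b = dd c a + dd d (b-1)) := by
    simp only [dd] <;> omega
  rcases key with h | ⟨hb1, h⟩ | ⟨hb1, h⟩ | ⟨hb1, h⟩ | ⟨hb1, h⟩
  · exact hP (a-1) b (a+1) b (by omega) hb ha2 hb (by omega)
      (by simp only [dd] <;> omega) h
  · exact hP (a-1) b a (b+1) (by omega) hb ha hb1 (by omega) (by simp only [dd] <;> omega) h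
  · exact hP (a+1) b a (b+1) ha2 hb ha hb1 (by omega) (by simp only [dd] <;> omega) h
  · exact hP (a-1) b a (b-1) (by omega) hb ha (by omega) (by omega)
      (by simp only [dd] <;> omega) h
  · exact hP (a+1) b a (b-1) ha2 hb ha (by omega) (by omega)
      (by simp only [dd] <;> omega) h

private lemma diag_aux {s t : ℕ} (hs : 2 ≤ s) (ht : 2 ≤ t)
    {a b c d : ℕ} (hA : a = 0 ∨ a = s-1) (hB : b = 0 ∨ b = t-1)
    (hC : c = 0 ∨ c = s-1) (hD : d = 0 ∨ d = t-1)
    (hac : a ≠ c) (hbd : b ≠ d)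
    (hP : ∀ x1 x2 y1 y2 : ℕ, x1 < s → x2 < t → y1 < s → y2 < t →
      ¬(x1 = y1 ∧ x2 = y2) →
      dd a x1 + dd b x2 = dd a y1 + dd b y2 →
      dd c x1 + dd d x2 = dd c y1 + dd d y2 → False) : False := by
  rcases hA with rfl | rfl <;> rcases hB with rfl | rfl
  · have hc2 : c = s - 1 := by omega
    have hd2 : d = t - 1 := by omega
    subst hc2 hd2
    exact hP 1 0 0 1 (by omega) (by omega) (by omega) (by omega) (by omega)
      (by simp only [dd] <;> omega) (by simp only [dd] <;> omega)
  · have hc2 : c = s - 1 := by omega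
    have hd2 : d = 0 := by omega
    subst hc2 hd2
    exact hP 1 (t-1) 0 (t-2) (by omega) (by omega) (by omega) (by omega) (by omega)
      (by simp only [dd] <;> omega) (by simp only [dd] <;> omega)
  · have hc2 : c = 0 := by omega
    have hd2 : d = t - 1 := by omega
    subst hc2 hd2
    exact hP (s-2) 0 (s-1) 1 (by omega) (by omega) (by omega) (by omega) (by omega)
      (by simp only [dd] <;> omega) (by simp only [dd] <;> omega)
  · have hc2 : c = 0 := by omega
    have hd2 : d = 0 := by omega
    subst hc2 hd2
    exact hP (s-2) (t-1) (s-1) (t-2) (by omega) (by omega) (by omega) (by omega) (by omega)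
      (by simp only [dd] <;> omega) (by simp only [dd] <;> omega)

private lemma resolve_of {s t : ℕ} (hs : 1 ≤ s) (ht : 1 ≤ t) {p q p' q' : ℕ}
    (hp : p < s) (hq : q < t) (hp' : p' < s) (hq' : q' < t)
    (hkey : ∀ x1 x2 y1 y2 : ℕ, x1 < s → x2 < t → y1 < s → y2 < t →
      dd p x1 + dd q x2 = dd p y1 + dd q y2 →
      dd p' x1 + dd q' x2 = dd p' y1 + dd q' y2 → x1 = y1 ∧ x2 = y2) :
    IsResolving (pathGraph s □ pathGraph t)
      {(⟨p, hp⟩, ⟨q, hq⟩), (⟨p', hp'⟩, ⟨q', hq'⟩)} := by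
  intro x y hxy
  by_contra hcon
  push_neg at hcon
  have h1 := hcon _ (Set.mem_insert _ _)
  have h2 := hcon _ (Set.mem_insert_of_mem _ (Set.mem_singleton _))
  simp only [grid_dist hs ht] at h1 h2
  try dsimp only at h1 h2
  have := hkey x.1.val x.2.val y.1.val y.2.val x.1.isLt x.2.isLt y.1.isLt y.2.isLt h1 h2
  exact hxy (Prod.ext_iff.mpr ⟨Fin.ext this.1, Fin.ext this.2⟩)

private lemma dim_eq_two {s t : ℕ} (hs : 2 ≤ s) (ht : 2 ≤ t) :
    metricDim (pathGraph s □ pathGraph t) = 2 := by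
  have hres1 : IsResolving (pathGraph s □ pathGraph t)
      {((⟨0, by omega⟩ : Fin s), (⟨0, by omega⟩ : Fin t)),
       ((⟨0, by omega⟩ : Fin s), (⟨t - 1, by omega⟩ : Fin t))} :=
    resolve_of (by omega) (by omega) (by omega) (by omega) (by omega) (by omega)
      (fun x1 x2 y1 y2 h1 h2 h3 h4 e1 e2 => by simp only [dd] at e1 e2 ⊢ <;> omega)
  have hne1 : ((⟨0, by omega⟩ : Fin s), (⟨0, by omega⟩ : Fin t)) ≠
      ((⟨0, by omega⟩ : Fin s), (⟨t - 1, by omega⟩ : Fin t)) := by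
    simp only [ne_eq, Prod.mk.injEq, Fin.mk.injEq, not_and]
    omega
  have h2mem : (2 : ℕ) ∈ {n | ∃ S : Set (Fin s × Fin t),
      IsResolving (pathGraph s □ pathGraph t) S ∧ S.ncard = n} :=
    ⟨_, hres1, Set.ncard_pair hne1⟩
  refine le_antisymm (Nat.sInf_le h2mem) (le_csInf ⟨2, h2mem⟩ ?_)
  rintro n ⟨S, hres, rfl⟩
  by_contra hlt
  push_neg at hlt
  interval_cases h : S.ncard
  · rw [Set.ncard_eq_zero S.toFinite] at h
    subst h
    obtain ⟨z, hz, -⟩ := hres ((⟨0, by omega⟩ : Fin s), (⟨0, by omega⟩ : Fin t))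
      ((⟨0, by omega⟩ : Fin s), (⟨1, by omega⟩ : Fin t))
      (by simp only [ne_eq, Prod.mk.injEq, Fin.mk.injEq, not_and]; omega)
    exact hz
  · rw [Set.ncard_eq_one] at h
    obtain ⟨z, rfl⟩ := h
    obtain ⟨⟨a, ha⟩, ⟨b, hb⟩⟩ := z
    have ha' : (if a = 0 then 1 else a - 1) < s := by split <;> omega
    have hb' : (if b = 0 then 1 else b - 1) < t := by split <;> omega
    obtain ⟨z', hz', hzd⟩ := hres ((⟨if a = 0 then 1 else a - 1, ha'⟩ : Fin s), ⟨b, hb⟩)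
      ((⟨a, ha⟩ : Fin s), (⟨if b = 0 then 1 else b - 1, hb'⟩ : Fin t))
      (by simp only [ne_eq, Prod.mk.injEq, Fin.mk.injEq, not_and]
          intro hh
          split at hh <;> omega)
    rw [Set.mem_singleton_iff] at hz'
    subst hz'
    rw [grid_dist (by omega) (by omega), grid_dist (by omega) (by omega)] at hzd
    dsimp only at hzd
    apply hzd
    simp only [dd]
    split <;> split <;> omega

end Aux

private lemma forward_aux (s t : ℕ) (hs : 2 ≤ s) (ht : 2 ≤ t)
    (S : Set (Fin s × Fin t))
    (hres : IsResolving (pathGraph s □ pathGraph t) S)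
    (hcard : S.ncard = metricDim (pathGraph s □ pathGraph t)) :
      (S = {(⟨0, Nat.lt_of_lt_of_le Nat.zero_lt_two hs⟩, ⟨0, Nat.lt_of_lt_of_le Nat.zero_lt_two ht⟩),
            (⟨0, Nat.lt_of_lt_of_le Nat.zero_lt_two hs⟩, ⟨t - 1, Nat.sub_lt (Nat.lt_of_lt_of_le Nat.zero_lt_two ht) Nat.one_pos⟩)} ∨
       S = {(⟨0, Nat.lt_of_lt_of_le Nat.zero_lt_two hs⟩, ⟨0, Nat.lt_of_lt_of_le Nat.zero_lt_two ht⟩),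
            (⟨s - 1, Nat.sub_lt (Nat.lt_of_lt_of_le Nat.zero_lt_two hs) Nat.one_pos⟩, ⟨0, Nat.lt_of_lt_of_le Nat.zero_lt_two ht⟩)} ∨
       S = {(⟨0, Nat.lt_of_lt_of_le Nat.zero_lt_two hs⟩, ⟨t - 1, Nat.sub_lt (Nat.lt_of_lt_of_le Nat.zero_lt_two ht) Nat.one_pos⟩),
            (⟨s - 1, Nat.sub_lt (Nat.lt_of_lt_of_le Nat.zero_lt_two hs) Nat.one_pos⟩, ⟨t - 1, Nat.sub_lt (Nat.lt_of_lt_of_le Nat.zero_lt_two ht) Nat.one_pos⟩)} ∨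
       S = {(⟨s - 1, Nat.sub_lt (Nat.lt_of_lt_of_le Nat.zero_lt_two hs) Nat.one_pos⟩, ⟨0, Nat.lt_of_lt_of_le Nat.zero_lt_two ht⟩),
            (⟨s - 1, Nat.sub_lt (Nat.lt_of_lt_of_le Nat.zero_lt_two hs) Nat.one_pos⟩, ⟨t - 1, Nat.sub_lt (Nat.lt_of_lt_of_le Nat.zero_lt_two ht) Nat.one_pos⟩)}) := by
  rw [dim_eq_two hs ht] at hcard
  obtain ⟨z1, z2, hne, rfl⟩ := Set.ncard_eq_two.mp hcard
  obtain ⟨⟨a, ha⟩, ⟨b, hb⟩⟩ := z1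
  obtain ⟨⟨c, hc⟩, ⟨d, hd⟩⟩ := z2
  have hP12 : ∀ x1 x2 y1 y2 : ℕ, x1 < s → x2 < t → y1 < s → y2 < t →
      ¬(x1 = y1 ∧ x2 = y2) →
      dd a x1 + dd b x2 = dd a y1 + dd b y2 →
      dd c x1 + dd d x2 = dd c y1 + dd d y2 → False := by
    intro x1 x2 y1 y2 hx1 hx2 hy1 hy2 hne' e1 e2
    obtain ⟨z, hz, hzd⟩ := hres (⟨⟨x1, hx1⟩, ⟨x2, hx2⟩⟩) (⟨⟨y1, hy1⟩, ⟨y2, hy2⟩⟩)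
      (by simp only [ne_eq, Prod.mk.injEq, Fin.mk.injEq, not_and]
          intro hh1 hh2
          exact hne' ⟨hh1, hh2⟩)
    rw [grid_dist (by omega) (by omega), grid_dist (by omega) (by omega)] at hzd
    rcases hz with rfl | hz
    · dsimp only at hzd
      exact hzd e1
    · rw [Set.mem_singleton_iff] at hz
      subst hz
      dsimp only at hzd
      exact hzd e2
  have hP21 : ∀ x1 x2 y1 y2 : ℕ, x1 < s → x2 < t → y1 < s → y2 < t →
      ¬(x1 = y1 ∧ x2 = y2) →
      dd c x1 + dd d x2 = dd c y1 + dd d y2 →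
      dd a x1 + dd b x2 = dd a y1 + dd b y2 → False :=
    fun x1 x2 y1 y2 h1 h2 h3 h4 h5 e1 e2 => hP12 x1 x2 y1 y2 h1 h2 h3 h4 h5 e2 e1
  have hPs12 : ∀ x2 x1 y2 y1 : ℕ, x2 < t → x1 < s → y2 < t → y1 < s →
      ¬(x2 = y2 ∧ x1 = y1) →
      dd b x2 + dd a x1 = dd b y2 + dd a y1 →
      dd d x2 + dd c x1 = dd d y2 + dd c y1 → False :=
    fun x2 x1 y2 y1 h2 h1 h4 h3 h5 e1 e2 =>
      hP12 x1 x2 y1 y2 h1 h2 h3 h4 (by tauto) (by omega) (by omega)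
  have hPs21 : ∀ x2 x1 y2 y1 : ℕ, x2 < t → x1 < s → y2 < t → y1 < s →
      ¬(x2 = y2 ∧ x1 = y1) →
      dd d x2 + dd c x1 = dd d y2 + dd c y1 →
      dd b x2 + dd a x1 = dd b y2 + dd a y1 → False :=
    fun x2 x1 y2 y1 h2 h1 h4 h3 h5 e1 e2 =>
      hP12 x1 x2 y1 y2 h1 h2 h3 h4 (by tauto) (by omega) (by omega)
  have hA : a = 0 ∨ a = s - 1 := corner_aux hs ht ha hb hc hd hP12
  have hB : b = 0 ∨ b = t - 1 := corner_aux ht hs hb ha hd hc hPs12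
  have hC : c = 0 ∨ c = s - 1 := corner_aux hs ht hc hd ha hb hP21
  have hD : d = 0 ∨ d = t - 1 := corner_aux ht hs hd hc hb ha hPs21
  have hnecd : ¬(a = c ∧ b = d) := by
    rintro ⟨rfl, rfl⟩
    exact hne rfl
  have hdiag : a = c ∨ b = d := by
    by_contra hcon
    push_neg at hcon
    exact diag_aux hs ht hA hB hC hD hcon.1 hcon.2 hP12
  rcases hdiag with rfl | rfl
  · -- a = c, so {b, d} = {0, t-1}
    rcases hB with rfl | rfl <;> rcases hD with rfl | rfl
    · exact absurd ⟨rfl, rfl⟩ hnecd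
    · rcases hA with rfl | rfl
      · exact Or.inl rfl
      · exact Or.inr (Or.inr (Or.inr rfl))
    · rcases hA with rfl | rfl
      · exact Or.inl (Set.pair_comm _ _)
      · exact Or.inr (Or.inr (Or.inr (Set.pair_comm _ _)))
    · exact absurd ⟨rfl, rfl⟩ hnecd
  · -- b = d, so {a, c} = {0, s-1}
    rcases hA with rfl | rfl <;> rcases hC with rfl | rfl
    · exact absurd ⟨rfl, rfl⟩ hnecd
    · rcases hB with rfl | rfl
      · exact Or.inr (Or.inl rfl)
      · exact Or.inr (Or.inr (Or.inl rfl))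
    · rcases hB with rfl | rfl
      · exact Or.inr (Or.inl (Set.pair_comm _ _))
      · exact Or.inr (Or.inr (Or.inl (Set.pair_comm _ _)))
    · exact absurd ⟨rfl, rfl⟩ hnecd

private lemma reverse_aux (s t : ℕ) (hs : 2 ≤ s) (ht : 2 ≤ t)
    (S : Set (Fin s × Fin t))
    (h :
      (S = {(⟨0, Nat.lt_of_lt_of_le Nat.zero_lt_two hs⟩, ⟨0, Nat.lt_of_lt_of_le Nat.zero_lt_two ht⟩),
            (⟨0, Nat.lt_of_lt_of_le Nat.zero_lt_two hs⟩, ⟨t - 1, Nat.sub_lt (Nat.lt_of_lt_of_le Nat.zero_lt_two ht) Nat.one_pos⟩)} ∨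
       S = {(⟨0, Nat.lt_of_lt_of_le Nat.zero_lt_two hs⟩, ⟨0, Nat.lt_of_lt_of_le Nat.zero_lt_two ht⟩),
            (⟨s - 1, Nat.sub_lt (Nat.lt_of_lt_of_le Nat.zero_lt_two hs) Nat.one_pos⟩, ⟨0, Nat.lt_of_lt_of_le Nat.zero_lt_two ht⟩)} ∨
       S = {(⟨0, Nat.lt_of_lt_of_le Nat.zero_lt_two hs⟩, ⟨t - 1, Nat.sub_lt (Nat.lt_of_lt_of_le Nat.zero_lt_two ht) Nat.one_pos⟩),
            (⟨s - 1, Nat.sub_lt (Nat.lt_of_lt_of_le Nat.zero_lt_two hs) Nat.one_pos⟩, ⟨t - 1, Nat.sub_lt (Nat.lt_of_lt_of_le Nat.zero_lt_two ht) Nat.one_pos⟩)} ∨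
       S = {(⟨s - 1, Nat.sub_lt (Nat.lt_of_lt_of_le Nat.zero_lt_two hs) Nat.one_pos⟩, ⟨0, Nat.lt_of_lt_of_le Nat.zero_lt_two ht⟩),
            (⟨s - 1, Nat.sub_lt (Nat.lt_of_lt_of_le Nat.zero_lt_two hs) Nat.one_pos⟩, ⟨t - 1, Nat.sub_lt (Nat.lt_of_lt_of_le Nat.zero_lt_two ht) Nat.one_pos⟩)})) :
    IsResolving (pathGraph s □ pathGraph t) S ∧
      S.ncard = metricDim (pathGraph s □ pathGraph t) := by
  revert h
  have key : ∀ (p q p' q' : ℕ) (hp : p < s) (hq : q < t) (hp' : p' < s) (hq' : q' < t),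
    ¬(p = p' ∧ q = q') →
    (∀ x1 x2 y1 y2 : ℕ, x1 < s → x2 < t → y1 < s → y2 < t →
      dd p x1 + dd q x2 = dd p y1 + dd q y2 →
      dd p' x1 + dd q' x2 = dd p' y1 + dd q' y2 → x1 = y1 ∧ x2 = y2) →
    IsResolving (pathGraph s □ pathGraph t)
      {((⟨p, hp⟩ : Fin s), (⟨q, hq⟩ : Fin t)),
       ((⟨p', hp'⟩ : Fin s), (⟨q', hq'⟩ : Fin t))} ∧
    ({((⟨p, hp⟩ : Fin s), (⟨q, hq⟩ : Fin t)),
      ((⟨p', hp'⟩ : Fin s), (⟨q', hq'⟩ : Fin t))} : Set (Fin s × Fin t)).ncard =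
      metricDim (pathGraph s □ pathGraph t) := by
    intro p q p' q' hp hq hp' hq' hne hkey
    refine ⟨resolve_of (by omega) (by omega) hp hq hp' hq' hkey, ?_⟩
    rw [dim_eq_two hs ht]
    exact Set.ncard_pair (by
      simp only [ne_eq, Prod.mk.injEq, Fin.mk.injEq, not_and]
      intro hh1 hh2
      exact hne ⟨hh1, hh2⟩)
  rintro (rfl | rfl | rfl | rfl)
  · exact key 0 0 0 (t-1) (by omega) (by omega) (by omega) (by omega) (by omega)
      (fun x1 x2 y1 y2 h1 h2 h3 h4 e1 e2 => by simp only [dd] at e1 e2 ⊢ <;> omega)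
  · exact key 0 0 (s-1) 0 (by omega) (by omega) (by omega) (by omega) (by omega)
      (fun x1 x2 y1 y2 h1 h2 h3 h4 e1 e2 => by simp only [dd] at e1 e2 ⊢ <;> omega)
  · exact key 0 (t-1) (s-1) (t-1) (by omega) (by omega) (by omega) (by omega) (by omega)
      (fun x1 x2 y1 y2 h1 h2 h3 h4 e1 e2 => by simp only [dd] at e1 e2 ⊢ <;> omega)
  · exact key (s-1) 0 (s-1) (t-1) (by omega) (by omega) (by omega) (by omega) (by omega)
      (fun x1 x2 y1 y2 h1 h2 h3 h4 e1 e2 => by simp only [dd] at e1 e2 ⊢ <;> omega)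

/-- For `s, t ≥ 2`, in the grid graph `G = P_s □ P_t`, a set
`S ⊆ V(G)` is a minimum resolving set iff `S` is one of the four pairs of corners
`S_1 = {(u_1,w_1),(u_1,w_t)}`, `S_2 = {(u_1,w_1),(u_s,w_1)}`,
`S_3 = {(u_1,w_t),(u_s,w_t)}`, `S_4 = {(u_s,w_1),(u_s,w_t)}`. -/
theorem stmt_17 (s t : ℕ) (hs : 2 ≤ s) (ht : 2 ≤ t)
    (S : Set (Fin s × Fin t)) :
    (IsResolving (pathGraph s □ pathGraph t) S ∧
        S.ncard = metricDim (pathGraph s □ pathGraph t)) ↔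
      (S = {(⟨0, by omega⟩, ⟨0, by omega⟩), (⟨0, by omega⟩, ⟨t - 1, by omega⟩)} ∨
       S = {(⟨0, by omega⟩, ⟨0, by omega⟩), (⟨s - 1, by omega⟩, ⟨0, by omega⟩)} ∨
       S = {(⟨0, by omega⟩, ⟨t - 1, by omega⟩), (⟨s - 1, by omega⟩, ⟨t - 1, by omega⟩)} ∨
       S = {(⟨s - 1, by omega⟩, ⟨0, by omega⟩), (⟨s - 1, by omega⟩, ⟨t - 1, by omega⟩)}) := by
  exact ⟨fun h => forward_aux s t hs ht S h.1 h.2, fun h => reverse_aux s t hs ht S (by tauto)⟩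
end

section
/- Let T be a finite tree (a connected acyclic simple graph) of order n ≥ 2. Then cdim(T) = dim(T) if and only if T is isomorphic to the path P_n on n vertices. -/
open SimpleGraph

variable {V : Type*}

/-- A leaf: a vertex with exactly one neighbor. -/
def AuxIsLeaf (T : SimpleGraph V) (v : V) : Prop :=
  (∃ w, T.Adj v w) ∧ ∀ w1 w2, T.Adj v w1 → T.Adj v w2 → w1 = w2

lemma aux_exists_adj_dist {G : SimpleGraph V} {u v : V} (h : G.dist u v ≠ 0) :
    ∃ w, G.Adj u w ∧ G.dist w v + 1 = G.dist u v := by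
  obtain ⟨p, hp⟩ := exists_walk_of_dist_ne_zero h
  cases p with
  | nil => exact absurd dist_self h
  | cons hadj q =>
    rename_i w
    refine ⟨w, hadj, ?_⟩
    have h1 : G.dist w v ≤ q.length := dist_le q
    have hr : G.Reachable w v := ⟨q⟩
    obtain ⟨q', hq'⟩ := hr.exists_walk_length_eq_dist
    have h2 := dist_le (Walk.cons hadj q')
    simp [Walk.length_cons] at h2 hp
    omega

lemma aux_dist_add_dist_le [DecidableEq V] {G : SimpleGraph V} {y u x : V} (p : G.Walk y u)
    (hx : x ∈ p.support) : G.dist y x + G.dist x u ≤ p.length := by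
  have hs := p.take_spec hx
  have h1 : G.dist y x ≤ (p.takeUntil x hx).length := dist_le _
  have h2 : G.dist x u ≤ (p.dropUntil x hx).length := dist_le _
  have := congrArg Walk.length hs
  rw [Walk.length_append] at this
  omega

lemma aux_adj_dist_cases {T : SimpleGraph V} (hT : T.IsTree) {u v : V} (h : T.Adj u v) (y : V) :
    T.dist y v = T.dist y u + 1 ∨ T.dist y u = T.dist y v + 1 := by
  have hc := hT.isConnected
  have huv : T.dist u v = 1 := dist_eq_one_iff_adj.mpr h
  have hvu : T.dist v u = 1 := dist_eq_one_iff_adj.mpr h.symm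
  have t1 : T.dist y v ≤ T.dist y u + 1 := by
    have := hc.dist_triangle (u := y) (v := u) (w := v); omega
  have t2 : T.dist y u ≤ T.dist y v + 1 := by
    have := hc.dist_triangle (u := y) (v := v) (w := u); omega
  by_contra hcon
  push_neg at hcon
  have heq : T.dist y u = T.dist y v := by omega
  obtain ⟨p, hp, hpl⟩ := hc.exists_path_of_dist y u
  obtain ⟨q, hq, hql⟩ := hc.exists_path_of_dist y v
  classical
  have hvns : v ∉ p.support := by
    intro hmem
    have := aux_dist_add_dist_le p hmem
    omega
  have hcp : (p.concat h).IsPath := by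
    rw [← Walk.isPath_reverse_iff, Walk.reverse_concat]
    exact ((Walk.isPath_reverse_iff p).mpr hp).cons (by simpa using hvns)
  obtain ⟨r, _, hr⟩ := hT.existsUnique_path y v
  have e1 : p.concat h = r := hr _ hcp
  have e2 : q = r := hr _ hq
  have : (p.concat h).length = q.length := by rw [e1, e2]
  rw [Walk.length_concat] at this
  omega

lemma aux_pred_unique {T : SimpleGraph V} (hT : T.IsTree) {y l u1 u2 : V}
    (h1 : T.Adj u1 l) (h2 : T.Adj u2 l)
    (d1 : T.dist y u1 + 1 = T.dist y l) (d2 : T.dist y u2 + 1 = T.dist y l) : u1 = u2 := by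
  have hc := hT.isConnected
  obtain ⟨p1, hp1⟩ := hc.exists_walk_length_eq_dist y u1
  obtain ⟨p2, hp2⟩ := hc.exists_walk_length_eq_dist y u2
  have hc1 : (p1.concat h1).IsPath := by
    apply Walk.isPath_of_length_eq_dist
    rw [Walk.length_concat]; omega
  have hc2 : (p2.concat h2).IsPath := by
    apply Walk.isPath_of_length_eq_dist
    rw [Walk.length_concat]; omega
  obtain ⟨r, _, hr⟩ := hT.existsUnique_path y l
  have e : p1.concat h1 = p2.concat h2 := by rw [hr _ hc1, hr _ hc2]
  have e' := congrArg Walk.reverse e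
  rw [Walk.reverse_concat, Walk.reverse_concat] at e'
  have := congrArg (fun w => Walk.getVert w 1) e'
  simpa [Walk.getVert_cons _ _ one_ne_zero] using this

/-- Splitting a distance in a connected graph. -/
lemma aux_dist_split {G : SimpleGraph V} (hc : G.Connected) {u v : V} {a b : ℕ}
    (h : G.dist u v = a + b) : ∃ x, G.dist u x = a ∧ G.dist x v = b := by
  induction a generalizing u with
  | zero => exact ⟨u, dist_self, by simpa using h⟩
  | succ a ih =>
    have hne : G.dist u v ≠ 0 := by omega
    obtain ⟨w, hadj, hw⟩ := aux_exists_adj_dist hne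
    obtain ⟨x, hx1, hx2⟩ := ih (u := w) (by omega)
    refine ⟨x, ?_, hx2⟩
    have t1 : G.dist u x ≤ a + 1 := by
      have := hc.dist_triangle (u := u) (v := w) (w := x)
      have : G.dist u w = 1 := dist_eq_one_iff_adj.mpr hadj
      have := hc.dist_triangle (u := u) (v := w) (w := x)
      simp [dist_eq_one_iff_adj.mpr hadj] at this
      omega
    have t2 : G.dist u v ≤ G.dist u x + G.dist x v := hc.dist_triangle
    omega

/-- A leaf: has exactly one neighbor (at most one, and at least one). -/
lemma aux_exists_adj [Fintype V] {T : SimpleGraph V} (hc : T.Connected)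
    (hn : 2 ≤ Fintype.card V) (v : V) : ∃ w, T.Adj v w := by
  have : Nontrivial V := Fintype.one_lt_card_iff_nontrivial.mp (by omega)
  obtain ⟨u, hu⟩ := exists_ne v
  have : T.dist v u ≠ 0 := by
    have := hc.pos_dist_of_ne (Ne.symm hu); omega
  obtain ⟨w, hw, _⟩ := aux_exists_adj_dist this
  exact ⟨w, hw⟩

/-- Beyond any x (away from y) there is a leaf. -/
lemma aux_exists_leaf_beyond [Fintype V] {T : SimpleGraph V} (hT : T.IsTree)
    (hn : 2 ≤ Fintype.card V) {x y : V} (hxy : x ≠ y) :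
    ∃ l, AuxIsLeaf T l ∧ T.dist l y = T.dist l x + T.dist x y := by
  have hc := hT.isConnected
  set A : Set V := {u | T.dist u y = T.dist u x + T.dist x y} with hA
  have hxA : x ∈ A := by simp [hA, dist_self]
  obtain ⟨l, hlA, hlmax⟩ : ∃ l ∈ A, ∀ a' ∈ A, T.dist l x ≤ T.dist a' x → T.dist l x = T.dist a' x := by
    obtain ⟨l, hl, hm⟩ := Set.exists_max_image A (fun u => T.dist u x) A.toFinite ⟨x, hxA⟩
    exact ⟨l, hl, fun a ha h => le_antisymm h (hm a ha)⟩
  have hxy1 : 1 ≤ T.dist x y := hc.pos_dist_of_ne hxy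
  have hlA' : T.dist l y = T.dist l x + T.dist x y := hlA
  refine ⟨l, ⟨aux_exists_adj hc hn l, ?_⟩, hlA'⟩
  intro w1 w2 hw1 hw2
  by_contra hne
  -- a neighbor farther from y contradicts maximality
  have key : ∀ w, T.Adj l w → T.dist y w = T.dist y l + 1 → False := by
    intro w hw hwy
    have t1 : T.dist w x ≤ T.dist l x + 1 := by
      have h1 := hc.dist_triangle (u := w) (v := l) (w := x)
      have h2 : T.dist w l = 1 := dist_eq_one_iff_adj.mpr (hw.symm)
      omega
    have t2 : T.dist l x + 1 ≤ T.dist w x := by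
      have h1 := hc.dist_triangle (u := w) (v := x) (w := y)
      have h2 : T.dist w y = T.dist y w := dist_comm
      have h3 : T.dist l y = T.dist y l := dist_comm
      omega
    have hwA : w ∈ A := by
      have h3 : T.dist l y = T.dist y l := dist_comm
      have h2 : T.dist w y = T.dist y w := dist_comm
      simp only [hA, Set.mem_setOf_eq]
      omega
    have := hlmax w hwA (by omega)
    omega
  have k1 := aux_adj_dist_cases hT hw1 y
  have k2 := aux_adj_dist_cases hT hw2 y
  rcases k1 with k1 | k1
  · exact key w1 hw1 k1
  rcases k2 with k2 | k2
  · exact key w2 hw2 k2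
  exact hne (aux_pred_unique hT (y := y) hw1.symm hw2.symm (by omega) (by omega))

/-- All leaves except one form a resolving set. -/
lemma aux_resolving_leaves_sans [Fintype V] {T : SimpleGraph V} (hT : T.IsTree)
    (hn : 2 ≤ Fintype.card V) (l0 : V) :
    IsResolving T ({v | AuxIsLeaf T v} \ {l0}) := by
  intro x y hxy
  have hc := hT.isConnected
  have hd : 1 ≤ T.dist x y := hc.pos_dist_of_ne hxy
  obtain ⟨lx, hlx, hlx2⟩ := aux_exists_leaf_beyond hT hn hxy
  obtain ⟨ly, hly, hly2⟩ := aux_exists_leaf_beyond hT hn (Ne.symm hxy)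
  have hdyx : T.dist y x = T.dist x y := dist_comm
  have hnelem : lx ≠ ly := by
    intro h; subst h
    omega
  rcases eq_or_ne lx l0 with h | h
  · refine ⟨ly, ⟨hly, by simp [← h, Ne.symm hnelem]⟩, by omega⟩
  · refine ⟨lx, ⟨hlx, by simp [h]⟩, by omega⟩

/-- Gate property: if `s` is a closest vertex of a connected set `S` to `x`,
then every `z ∈ S` satisfies `d(z,x) = d(z,s) + d(s,x)`. -/
lemma aux_gate_prop {T : SimpleGraph V} (hT : T.IsTree) {S : Set V}
    (hS : (T.induce S).Connected) {s x : V} (hs : s ∈ S)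
    (hmin : ∀ t ∈ S, T.dist s x ≤ T.dist t x) :
    ∀ z ∈ S, T.dist z x = T.dist z s + T.dist s x := by
  have hc := hT.isConnected
  suffices key : ∀ n : ℕ, ∀ z, ∀ hz : z ∈ S, (T.induce S).dist ⟨z, hz⟩ ⟨s, hs⟩ = n →
      T.dist z x = T.dist z s + T.dist s x by
    intro z hz; exact key _ z hz rfl
  intro n
  induction n using Nat.strong_induction_on with
  | _ n ih =>
    intro z hz hdist
    rcases Nat.eq_zero_or_pos n with h0 | hpos
    · subst h0
      have hzz : (⟨z, hz⟩ : S) = ⟨s, hs⟩ := hS.dist_eq_zero_iff.mp hdist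
      have hzs : z = s := congrArg Subtype.val hzz
      subst hzs
      simp [dist_self]
    · have hne : (T.induce S).dist ⟨z, hz⟩ ⟨s, hs⟩ ≠ 0 := by omega
      obtain ⟨w, hadj, hw⟩ := aux_exists_adj_dist hne
      have hTadj : T.Adj z (w : V) := by
        simpa [comap_adj] using hadj
      have ihw : T.dist (w : V) x = T.dist (w : V) s + T.dist s x :=
        ih ((T.induce S).dist w ⟨s, hs⟩) (by omega) (w : V) w.2 rfl
      obtain ⟨t, htS⟩ := w
      simp only at hTadj ihw hw ⊢
      have hA := aux_adj_dist_cases hT hTadj x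
      have hB := aux_adj_dist_cases hT hTadj s
      -- commutation facts
      have c1 : T.dist x z = T.dist z x := dist_comm
      have c2 : T.dist x t = T.dist t x := dist_comm
      have c3 : T.dist s z = T.dist z s := dist_comm
      have c4 : T.dist s t = T.dist t s := dist_comm
      have hminz := hmin z hz
      have hmint := hmin t htS
      rcases hA with hA | hA <;> rcases hB with hB | hB
      · -- z closer to x, z closer to s : consistent
        omega
      · -- z closer to x, z farther from s: impossible (or base)
        rcases eq_or_ne t s with hts | hts
        · rw [hts] at hA c2
          omega
        · have htsd : T.dist t s ≠ 0 := by
            have := hc.pos_dist_of_ne hts; omega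
          obtain ⟨w2, hw2adj, hw2s⟩ := aux_exists_adj_dist htsd
          have e1 : T.dist w2 x ≤ T.dist w2 s + T.dist s x := hc.dist_triangle
          have e2 : T.dist t x ≤ T.dist t w2 + T.dist w2 x := hc.dist_triangle
          have e3 : T.dist t w2 = 1 := dist_eq_one_iff_adj.mpr hw2adj
          have c5 : T.dist x w2 = T.dist w2 x := dist_comm
          have c6 : T.dist s w2 = T.dist w2 s := dist_comm
          have hzw2 : w2 = z :=
            aux_pred_unique hT (y := x) hw2adj.symm hTadj (by omega) (by omega)
          rw [hzw2] at hw2s e1 e2 e3 c5 c6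
          omega
      · -- z farther from x, z closer to s: impossible
        have htsd : T.dist t s ≠ 0 := by omega
        obtain ⟨w2, hw2adj, hw2s⟩ := aux_exists_adj_dist htsd
        have e1 : T.dist w2 x ≤ T.dist w2 s + T.dist s x := hc.dist_triangle
        have e2 : T.dist t x ≤ T.dist t w2 + T.dist w2 x := hc.dist_triangle
        have e3 : T.dist t w2 = 1 := dist_eq_one_iff_adj.mpr hw2adj
        have c5 : T.dist x w2 = T.dist w2 x := dist_comm
        have c6 : T.dist s w2 = T.dist w2 s := dist_comm
        have hzw2 : w2 = z :=
          aux_pred_unique hT (y := s) hw2adj.symm hTadj (by omega) (by omega)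
        rw [hzw2] at hw2s e1 e2 e3 c5 c6
        omega
      · -- z farther from both : consistent
        omega

/-- helper: a leaf of `T` in `S` cannot be the gate of a vertex outside `S`. -/
lemma aux_leaf_gate {T : SimpleGraph V} (hT : T.IsTree) {S : Set V}
    (hSconn : (T.induce S).Connected) (h2 : 2 ≤ S.ncard) {l1 l2 : V}
    (hleaf : AuxIsLeaf T l1) (hl1 : l1 ∈ S) (hl2 : l2 ∉ S)
    (hmin : ∀ t ∈ S, T.dist l1 l2 ≤ T.dist t l2) : False := by
  have hc := hT.isConnected
  -- l1 has a neighbor inside S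
  obtain ⟨t, htS, htne⟩ := Set.exists_ne_of_one_lt_ncard (s := S) (by omega) l1
  have hsub : (⟨l1, hl1⟩ : S) ≠ ⟨t, htS⟩ := by
    simp [Subtype.ext_iff]; exact fun h => htne h.symm
  have hdS : (T.induce S).dist ⟨l1, hl1⟩ ⟨t, htS⟩ ≠ 0 := by
    have := hSconn.pos_dist_of_ne hsub; omega
  obtain ⟨u, huadj, _⟩ := aux_exists_adj_dist hdS
  have huT : T.Adj l1 (u : V) := by simpa [comap_adj] using huadj
  -- l1 has a neighbor towards l2
  have hne12 : l1 ≠ l2 := fun h => hl2 (h ▸ hl1)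
  have hd12 : T.dist l1 l2 ≠ 0 := by have := hc.pos_dist_of_ne hne12; omega
  obtain ⟨w, hwadj, hwd⟩ := aux_exists_adj_dist hd12
  have huw : (u : V) = w := hleaf.2 _ _ huT hwadj
  have := hmin (u : V) u.2
  rw [huw] at this
  omega

/-- helper: two distinct leaves outside `S` cannot share a gate. -/
lemma aux_two_leaves_gate {T : SimpleGraph V} (hT : T.IsTree) {S : Set V}
    (hres : IsResolving T S) {s l1 l2 : V} (hs : s ∈ S)
    (hg1 : ∀ z ∈ S, T.dist z l1 = T.dist z s + T.dist s l1)
    (hg2 : ∀ z ∈ S, T.dist z l2 = T.dist z s + T.dist s l2)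
    (hleaf : AuxIsLeaf T l1) (hr1 : 1 ≤ T.dist s l1)
    (hlt : T.dist s l1 < T.dist s l2) : False := by
  have hc := hT.isConnected
  set r1 := T.dist s l1 with hr1d
  set r2 := T.dist s l2 with hr2d
  obtain ⟨b, hb⟩ : ∃ b, r2 = r1 + b := ⟨r2 - r1, by omega⟩
  have hb1 : 1 ≤ b := by omega
  obtain ⟨x, hx1, hx2⟩ := aux_dist_split hc (u := s) (v := l2) hb
  have hxl1 : ∀ z ∈ S, T.dist z x = T.dist z l1 := by
    intro z hz
    have e1 : T.dist z x ≤ T.dist z s + T.dist s x := hc.dist_triangle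
    have e2 : T.dist z l2 ≤ T.dist z x + T.dist x l2 := hc.dist_triangle
    have e3 := hg1 z hz
    have e4 := hg2 z hz
    omega
  by_cases hx : x = l1
  · subst hx
    -- x is a leaf strictly inside the geodesic from s to l2 : contradiction
    have hc1 : T.dist x s = r1 := by rw [dist_comm]
    obtain ⟨w1, hw1adj, hw1d⟩ := aux_exists_adj_dist (show T.dist x s ≠ 0 by omega)
    obtain ⟨w2, hw2adj, hw2d⟩ := aux_exists_adj_dist (show T.dist x l2 ≠ 0 by omega)
    have hweq : w1 = w2 := hleaf.2 _ _ hw1adj hw2adj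
    subst hweq
    have e5 : T.dist s l2 ≤ T.dist s w1 + T.dist w1 l2 := hc.dist_triangle
    have e6 : T.dist s w1 = T.dist w1 s := dist_comm
    omega
  · obtain ⟨z, hz, hzd⟩ := hres x l1 hx
    exact hzd (hxl1 z hz)

/-- The number of leaves of a tree is at most the size of any connected resolving set
of size at least 2. -/
lemma aux_leaf_card_le [Fintype V] {T : SimpleGraph V} (hT : T.IsTree)
    {S : Set V} (hres : IsResolving T S) (hSconn : (T.induce S).Connected)
    (h2 : 2 ≤ S.ncard) : {v | AuxIsLeaf T v}.ncard ≤ S.ncard := by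
  classical
  have hc := hT.isConnected
  have hSne : S.Nonempty := by
    rw [← Set.ncard_pos S.toFinite]; omega
  have gate : ∀ v : V, ∃ s, s ∈ S ∧ (∀ t ∈ S, T.dist s v ≤ T.dist t v) ∧ (v ∈ S → s = v) := by
    intro v
    by_cases hv : v ∈ S
    · exact ⟨v, hv, fun t ht => by simp [dist_self], fun _ => rfl⟩
    · obtain ⟨s, hsS, hmin⟩ := Set.exists_min_image S (fun t => T.dist t v) S.toFinite hSne
      exact ⟨s, hsS, hmin, fun h => absurd h hv⟩
  choose f hfS hfmin hfid using gate
  have hgp : ∀ v, ∀ z ∈ S, T.dist z v = T.dist z (f v) + T.dist (f v) v := fun v =>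
    aux_gate_prop hT hSconn (hfS v) (hfmin v)
  apply Set.ncard_le_ncard_of_injOn f (fun v _ => hfS v) _ S.toFinite
  intro l1 h1 l2 h2' hf
  simp only [Set.mem_setOf_eq] at h1 h2'
  by_cases hl1 : l1 ∈ S <;> by_cases hl2 : l2 ∈ S
  · rw [hfid l1 hl1, hfid l2 hl2] at hf; exact hf
  · exfalso
    refine aux_leaf_gate hT hSconn h2 h1 hl1 hl2 ?_
    have : f l2 = l1 := by rw [← hf, hfid l1 hl1]
    exact this ▸ hfmin l2
  · exfalso
    refine aux_leaf_gate hT hSconn h2 h2' hl2 hl1 ?_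
    have : f l1 = l2 := by rw [hf, hfid l2 hl2]
    exact this ▸ hfmin l1
  · by_contra hne
    have hg1 := hgp l1
    have hg2 : ∀ z ∈ S, T.dist z l2 = T.dist z (f l1) + T.dist (f l1) l2 := by
      rw [hf]; exact hgp l2
    have hr1 : 1 ≤ T.dist (f l1) l1 := by
      have hne1 : f l1 ≠ l1 := fun h => hl1 (h ▸ hfS l1)
      have := hc.pos_dist_of_ne hne1; omega
    have hr2 : 1 ≤ T.dist (f l1) l2 := by
      have hne2 : f l1 ≠ l2 := fun h => hl2 (h ▸ hfS l1)
      have := hc.pos_dist_of_ne hne2; omega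
    have hrne : T.dist (f l1) l1 ≠ T.dist (f l1) l2 := by
      obtain ⟨z, hz, hzd⟩ := hres l1 l2 hne
      have e1 := hg1 z hz
      have e2 := hg2 z hz
      omega
    rcases Nat.lt_or_ge (T.dist (f l1) l1) (T.dist (f l1) l2) with hlt | hge
    · exact aux_two_leaves_gate hT hres (hfS l1) hg1 hg2 h1 hr1 hlt
    · exact aux_two_leaves_gate hT hres (hfS l1) hg2 hg1 h2' hr2 (by omega)

/-- A vertex whose distance function is injective turns a tree into a path. -/
lemma aux_iso_of_singleton [Fintype V] {T : SimpleGraph V} (hT : T.IsTree)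
    (hn : 2 ≤ Fintype.card V) {z : V}
    (hinj : ∀ x y : V, x ≠ y → T.dist z x ≠ T.dist z y) :
    Nonempty (T ≃g pathGraph (Fintype.card V)) := by
  have hc := hT.isConnected
  have hbound : ∀ v : V, T.dist z v < Fintype.card V := by
    intro v
    obtain ⟨p, hp, hpl⟩ := hc.exists_path_of_dist z v
    rw [← hpl]
    exact hp.length_lt
  set f : V → Fin (Fintype.card V) := fun v => ⟨T.dist z v, hbound v⟩ with hf
  have hfinj : Function.Injective f := by
    intro a b h
    by_contra hne
    exact hinj a b hne (by simpa [hf, Fin.ext_iff] using h)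
  have hfbij : Function.Bijective f :=
    (Fintype.bijective_iff_injective_and_card f).mpr ⟨hfinj, by simp⟩
  refine ⟨{ toEquiv := Equiv.ofBijective f hfbij, map_rel_iff' := ?_ }⟩
  intro a b
  simp only [Equiv.ofBijective_apply]
  rw [pathGraph_adj]
  have hfa : (f a).val = T.dist z a := rfl
  have hfb : (f b).val = T.dist z b := rfl
  constructor
  · rintro (h | h)
    · -- dist z a + 1 = dist z b
      rw [hfa, hfb] at h
      have hdb : T.dist b z ≠ 0 := by rw [dist_comm]; omega
      obtain ⟨w, hw, hwd⟩ := aux_exists_adj_dist hdb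
      have hzw : T.dist z w = T.dist z a := by
        have c1 : T.dist w z = T.dist z w := dist_comm
        have c2 : T.dist b z = T.dist z b := dist_comm
        omega
      have : w = a := by
        by_contra hne
        exact hinj w a hne hzw
      exact (this ▸ hw).symm
    · rw [hfa, hfb] at h
      have hdb : T.dist a z ≠ 0 := by rw [dist_comm]; omega
      obtain ⟨w, hw, hwd⟩ := aux_exists_adj_dist hdb
      have hzw : T.dist z w = T.dist z b := by
        have c1 : T.dist w z = T.dist z w := dist_comm
        have c2 : T.dist a z = T.dist z a := dist_comm
        omega
      have : w = b := by
        by_contra hne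
        exact hinj w b hne hzw
      exact this ▸ hw
  · intro h
    rw [hfa, hfb]
    have hne := hinj a b h.ne
    have e1 : T.dist z b ≤ T.dist z a + 1 := by
      have := hc.dist_triangle (u := z) (v := a) (w := b)
      have := dist_eq_one_iff_adj.mpr h
      omega
    have e2 : T.dist z a ≤ T.dist z b + 1 := by
      have := hc.dist_triangle (u := z) (v := b) (w := a)
      have := dist_eq_one_iff_adj.mpr h.symm
      omega
    omega

lemma aux_pg_walk_lb {n : ℕ} {a b : Fin n} (p : (pathGraph n).Walk a b) :
    b.val ≤ a.val + p.length := by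
  induction p with
  | nil => simp
  | cons h q ih =>
    rw [pathGraph_adj] at h
    rw [Walk.length_cons]
    omega

lemma aux_pathGraph_dist {n : ℕ} (hn : 2 ≤ n) (i : Fin n) :
    (pathGraph n).dist ⟨0, by omega⟩ i = i.val := by
  obtain ⟨m, rfl⟩ : ∃ m, n = m + 1 := ⟨n - 1, by omega⟩
  have hc := pathGraph_connected m
  apply le_antisymm
  · -- upper bound by induction on i.val
    obtain ⟨j, hj⟩ := i
    induction j with
    | zero => simp [dist_self]
    | succ k ih =>
      have hadj : (pathGraph (m + 1)).Adj ⟨k, by omega⟩ ⟨k + 1, hj⟩ := by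
        rw [pathGraph_adj]; left; rfl
      have e1 := hc.dist_triangle (u := (⟨0, by omega⟩ : Fin (m + 1)))
        (v := ⟨k, by omega⟩) (w := ⟨k + 1, hj⟩)
      have e2 : (pathGraph (m + 1)).dist ⟨k, by omega⟩ ⟨k + 1, hj⟩ = 1 :=
        dist_eq_one_iff_adj.mpr hadj
      have e3 := ih (by omega)
      simp only [Fin.val_mk] at e3 ⊢
      omega
  · obtain ⟨p, hp⟩ := hc.exists_walk_length_eq_dist ⟨0, by omega⟩ i
    have := aux_pg_walk_lb p
    simp only [Fin.val_mk] at this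
    omega

lemma aux_iso_dist_le {W : Type*} {G : SimpleGraph V} {H : SimpleGraph W}
    (e : G ≃g H) (hG : G.Connected) (u v : V) : H.dist (e u) (e v) ≤ G.dist u v := by
  obtain ⟨p, hp⟩ := hG.exists_walk_length_eq_dist u v
  have := dist_le (p.map e.toHom)
  rwa [Walk.length_map, hp] at this

lemma aux_iso_dist {W : Type*} {G : SimpleGraph V} {H : SimpleGraph W}
    (e : G ≃g H) (hG : G.Connected) (u v : V) : H.dist (e u) (e v) = G.dist u v := by
  have hH : H.Connected := e.connected_iff.mp hG
  apply le_antisymm (aux_iso_dist_le e hG u v)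
  have := aux_iso_dist_le e.symm hH (e u) (e v)
  simpa using this

/-- For a finite tree `T` of order `n ≥ 2`, `cdim(T) = dim(T)` iff
`T` is isomorphic to the path `P_n`. -/
theorem stmt_19 {V : Type*} [Fintype V] (T : SimpleGraph V) (hT : T.IsTree)
    (hn : 2 ≤ Fintype.card V) :
    cdim T = metricDim T ↔ Nonempty (T ≃g pathGraph (Fintype.card V)) := by
  classical
  have hc := hT.isConnected
  have hpair : ∃ a b : V, a ≠ b := by
    have : Nontrivial V := Fintype.one_lt_card_iff_nontrivial.mp (by omega)
    obtain ⟨a, b, h⟩ := exists_pair_ne V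
    exact ⟨a, b, h⟩
  have hnotzero : ∀ S : Set V, IsResolving T S → S.Nonempty := by
    intro S hS
    obtain ⟨a, b, hab⟩ := hpair
    obtain ⟨w, hw, _⟩ := hS a b hab
    exact ⟨w, hw⟩
  have huniv_res : IsResolving T Set.univ := by
    intro x y hxy
    refine ⟨x, trivial, ?_⟩
    rw [dist_self]
    have := hc.pos_dist_of_ne hxy
    omega
  have huniv_conn : (T.induce Set.univ).Connected := (induceUnivIso T).connected_iff.mpr hc
  have hcne : {m | ∃ S : Set V, IsConnResolving T S ∧ S.ncard = m}.Nonempty :=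
    ⟨_, Set.univ, ⟨huniv_res, huniv_conn⟩, rfl⟩
  constructor
  · intro heq
    obtain ⟨S, ⟨hres, hconn⟩, hcard0⟩ := Nat.sInf_mem hcne
    have hcard : S.ncard = cdim T := hcard0
    have hk1 : cdim T ≠ 0 := by
      intro h0
      have hS0 : S = ∅ := by
        rw [← Set.ncard_eq_zero S.toFinite]
        rw [hcard]; exact h0
      obtain ⟨w, hw⟩ := hnotzero S hres
      rw [hS0] at hw
      exact hw
    rcases Nat.lt_or_ge (cdim T) 2 with hk | hk
    · -- cdim T = 1 : T is a path
      have hone : S.ncard = 1 := by omega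
      obtain ⟨z, rfl⟩ := Set.ncard_eq_one.mp hone
      apply aux_iso_of_singleton hT hn (z := z)
      intro x y hxy
      obtain ⟨w, hw, hd⟩ := hres x y hxy
      rw [Set.mem_singleton_iff] at hw
      rw [← hw]
      exact hd
    · -- cdim T ≥ 2 : contradiction
      exfalso
      obtain ⟨a, b, hab⟩ := hpair
      obtain ⟨l0, hl0, _⟩ := aux_exists_leaf_beyond hT hn hab
      have hres2 := aux_resolving_leaves_sans hT hn l0
      have hLle : {v | AuxIsLeaf T v}.ncard ≤ S.ncard :=
        aux_leaf_card_le hT hres hconn (by omega)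
      have hl0mem : l0 ∈ {v | AuxIsLeaf T v} := hl0
      have hLpos : 1 ≤ {v | AuxIsLeaf T v}.ncard := by
        rw [Nat.one_le_iff_ne_zero]
        intro h
        rw [Set.ncard_eq_zero (Set.toFinite _)] at h
        rw [h] at hl0mem
        exact hl0mem
      have hdim_le : metricDim T ≤ {v | AuxIsLeaf T v}.ncard - 1 := by
        apply Nat.sInf_le
        refine ⟨_, hres2, ?_⟩
        rw [Set.ncard_diff_singleton_of_mem hl0mem]
      rw [← heq] at hdim_le
      omega
  · rintro ⟨e⟩
    have h0lt : 0 < Fintype.card V := by omega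
    set z := e.symm ⟨0, h0lt⟩ with hzdef
    have hdist : ∀ v : V, T.dist z v = (e v).val := by
      intro v
      have h1 : (pathGraph (Fintype.card V)).dist (e z) (e v) = T.dist z v :=
        aux_iso_dist e hc z v
      have h2 : e z = ⟨0, h0lt⟩ := by rw [hzdef]; simp
      rw [h2] at h1
      rw [← h1, aux_pathGraph_dist hn (e v)]
    have hres : IsResolving T {z} := by
      intro x y hxy
      refine ⟨z, rfl, ?_⟩
      rw [hdist x, hdist y]
      intro hval
      exact hxy (e.injective (Fin.ext hval))
    have hconn : (T.induce ({z} : Set V)).Connected := by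
      haveI : Nonempty ({z} : Set V) := ⟨⟨z, rfl⟩⟩
      refine ⟨fun a b => ?_⟩
      have : a = b := Subtype.ext (by
        have ha : (a : V) = z := a.2
        have hb : (b : V) = z := b.2
        rw [ha, hb])
      exact this ▸ Reachable.refl a
    have hmne : {m | ∃ S : Set V, IsResolving T S ∧ S.ncard = m}.Nonempty :=
      ⟨1, {z}, hres, Set.ncard_singleton z⟩
    have hcne' : {m | ∃ S : Set V, IsConnResolving T S ∧ S.ncard = m}.Nonempty :=
      ⟨1, {z}, ⟨hres, hconn⟩, Set.ncard_singleton z⟩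
    have hm0 : metricDim T ≠ 0 := by
      intro h0
      obtain ⟨S', hS', hcard'⟩ := Nat.sInf_mem hmne
      have : S' = ∅ := by
        rw [← Set.ncard_eq_zero S'.toFinite, hcard']
        exact h0
      obtain ⟨w, hw⟩ := hnotzero S' hS'
      rw [this] at hw
      exact hw
    have hc0 : cdim T ≠ 0 := by
      intro h0
      obtain ⟨S', hS', hcard'⟩ := Nat.sInf_mem hcne'
      have : S' = ∅ := by
        rw [← Set.ncard_eq_zero S'.toFinite, hcard']
        exact h0
      obtain ⟨w, hw⟩ := hnotzero S' hS'.1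
      rw [this] at hw
      exact hw
    have hm1 : metricDim T ≤ 1 := Nat.sInf_le ⟨{z}, hres, Set.ncard_singleton z⟩
    have hc1 : cdim T ≤ 1 := Nat.sInf_le ⟨{z}, ⟨hres, hconn⟩, Set.ncard_singleton z⟩
    omega
end
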